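/- arXiv:2403.04589 — 5 statements merged into one kernel-verified Lean document; each statement's English description precedes it below -/
import Mathlib

section
/- Let D be a finite directed acyclic graph. Then the minimum number of directed paths of D whose vertex sets together cover all vertices of D is equal to the maximum size of an antichain of D, i.e., of a set of vertices that are pairwise unreachable from one another by directed paths. -/
/-- A directed path in the digraph with arc relation `A`. -/
structure DiPath {V : Type*} (A : V → V → Prop) where
  len : ℕ
  verts : Fin (len + 1) → V
  inj : Function.Injective verts
  adj : ∀ i : Fin len, A (verts i.castSucc) (verts i.succ)

open Relation Finset

section Helpers

variable {V : Type*} {A : V → V → Prop}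

lemma dag_steps_aux {n : ℕ} {f : Fin (n + 1) → V}
    (hadj : ∀ i : Fin n, A (f i.castSucc) (f i.succ)) (i : Fin (n + 1)) :
    ∀ (j : ℕ) (hj : j < n + 1), (i : ℕ) < j → TransGen A (f i) (f ⟨j, hj⟩) := by
  intro j
  induction j with
  | zero => intro hj h; exact absurd h (Nat.not_lt_zero _)
  | succ j ihj =>
      intro hj h
      have hjn : j < n := Nat.lt_of_succ_lt_succ hj
      have hstep : A (f ⟨j, Nat.lt_succ_of_lt hjn⟩) (f ⟨j + 1, hj⟩) := hadj ⟨j, hjn⟩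
      rcases Nat.lt_succ_iff_lt_or_eq.1 h with h' | h'
      · exact (ihj (Nat.lt_succ_of_lt hjn) h').tail hstep
      · have hi : i = ⟨j, Nat.lt_succ_of_lt hjn⟩ := Fin.ext h'
        rw [hi]; exact TransGen.single hstep

lemma dag_steps {n : ℕ} {f : Fin (n + 1) → V}
    (hadj : ∀ i : Fin n, A (f i.castSucc) (f i.succ)) {i j : Fin (n + 1)} (h : i < j) :
    TransGen A (f i) (f j) := by
  have := dag_steps_aux hadj i j.1 j.2 h
  simpa using this

lemma dag_le_steps {n : ℕ} {f : Fin (n + 1) → V}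
    (hadj : ∀ i : Fin n, A (f i.castSucc) (f i.succ)) {i j : Fin (n + 1)} (h : i ≤ j) :
    ReflTransGen A (f i) (f j) := by
  rcases eq_or_lt_of_le h with rfl | h'
  · exact ReflTransGen.refl
  · exact (dag_steps hadj h').to_reflTransGen

/-- Build a `DiPath` from a nonempty `A`-chain list, using acyclicity for injectivity. -/
lemma dag_list_to_path (hacyclic : ∀ v : V, ¬ TransGen A v v) (L : List V) (hL : L ≠ [])
    (hch : L.Chain' A) : ∃ p : DiPath A, ∀ v ∈ L, v ∈ Set.range p.verts := by
  obtain ⟨n, hn⟩ : ∃ n, L.length = n + 1 :=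
    ⟨L.length - 1, by have := List.length_pos_iff.2 hL; omega⟩
  set f : Fin (n + 1) → V := fun i => L.get (Fin.cast hn.symm i) with hf
  have hadj : ∀ i : Fin n, A (f i.castSucc) (f i.succ) := by
    intro i
    have h2 := List.isChain_iff_getElem.1 hch i.val (by omega)
    exact h2
  have hinj : Function.Injective f := by
    intro a b hab
    by_contra hne
    rcases lt_or_gt_of_ne hne with h | h
    · have := dag_steps hadj h
      rw [hab] at this
      exact hacyclic _ this
    · have := dag_steps hadj h
      rw [hab] at this
      exact hacyclic _ this
  refine ⟨⟨n, f, hinj, hadj⟩, ?_⟩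
  intro v hv
  obtain ⟨i, hi⟩ := List.mem_iff_get.1 hv
  exact ⟨Fin.cast hn i, by simpa [hf] using hi⟩

/-- An antichain is at most as large as any path cover. -/
lemma dag_anti_le_cover {S : Finset V}
    (hanti : ∀ x ∈ S, ∀ y ∈ S, x ≠ y → ¬ ReflTransGen A x y) {n : ℕ} (C : Fin n → DiPath A)
    (hcov : ∀ v : V, ∃ i, v ∈ Set.range (C i).verts) : S.card ≤ n := by
  classical
  have hg : ∀ v : V, ∃ i, v ∈ Set.range (C i).verts := hcov
  choose g hgmem using hg
  have : S.card ≤ (Finset.univ : Finset (Fin n)).card := by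
    apply Finset.card_le_card_of_injOn g (fun _ _ => Finset.mem_univ _)
    intro u hu v hv huv
    by_contra hne
    have key : ∀ (i : Fin n) (u' v' : V), u' ∈ Set.range (C i).verts →
        v' ∈ Set.range (C i).verts → ReflTransGen A u' v' ∨ ReflTransGen A v' u' := by
      rintro i u' v' ⟨a, rfl⟩ ⟨b, rfl⟩
      rcases le_total a b with h | h
      · exact Or.inl (dag_le_steps (C i).adj h)
      · exact Or.inr (dag_le_steps (C i).adj h)
    have hv' : v ∈ Set.range (C (g u)).verts := by rw [huv]; exact hgmem v
    rcases key (g u) u v (hgmem u) hv' with h | h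
    · exact hanti u hu v hv hne h
    · exact hanti v hv u hu (Ne.symm hne) h
  simpa using this

end Helpers

section Dilworth

variable {α : Type*} [PartialOrder α] [DecidableEq α]

/-- Dilworth's theorem for finite sets: there exist a partition of `P` into `k` nonempty
chains and an antichain in `P` of size `k`. -/
lemma dilworth_finset (P : Finset α) :
    ∃ (k : ℕ) (C : Fin k → Finset α) (S : Finset α),
      (∀ i, (C i).Nonempty) ∧
      (∀ i, ∀ x ∈ C i, ∀ y ∈ C i, x ≤ y ∨ y ≤ x) ∧
      (∀ i j, i ≠ j → Disjoint (C i) (C j)) ∧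
      (∀ i, C i ⊆ P) ∧
      (∀ v ∈ P, ∃ i, v ∈ C i) ∧
      S ⊆ P ∧ S.card = k ∧ (∀ x ∈ S, ∀ y ∈ S, x ≠ y → ¬ x ≤ y) := by
  classical
  induction P using Finset.strongInduction with
  | _ P IH =>
  rcases P.eq_empty_or_nonempty with rfl | hP
  · exact ⟨0, Fin.elim0, ∅, fun i => i.elim0, fun i => i.elim0, fun i => i.elim0,
      fun i => i.elim0, fun v hv => absurd hv (Finset.notMem_empty v),
      Finset.Subset.refl _, Finset.card_empty, fun x hx => absurd hx (Finset.notMem_empty x)⟩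
  obtain ⟨m, hmP, hmax⟩ : ∃ m ∈ P, ∀ x ∈ P, ¬ m < x := by
    obtain ⟨m, hm⟩ := P.exists_maximal hP
    exact ⟨m, hm.1, fun x hx hlt => hlt.not_ge (hm.2 hx hlt.le)⟩
  set P' := P.erase m with hP'def
  have hP'ss : P' ⊂ P := Finset.erase_ssubset hmP
  have hP'P : P' ⊆ P := Finset.erase_subset _ _
  obtain ⟨k', C', S', hne, hch, hdisj, hsub, hcov, hS'P, hS'card, hS'anti⟩ := IH P' hP'ss
  -- "good" elements: members of some antichain of size k' in P'
  set good : α → Prop := fun z => ∃ T : Finset α, T ⊆ P' ∧ T.card = k' ∧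
    (∀ x ∈ T, ∀ y ∈ T, x ≠ y → ¬ x ≤ y) ∧ z ∈ T with hgood_def
  -- every antichain of size k' in P' meets every chain
  have hmeet : ∀ T : Finset α, T ⊆ P' → T.card = k' →
      (∀ x ∈ T, ∀ y ∈ T, x ≠ y → ¬ x ≤ y) → ∀ i : Fin k', ∃ t ∈ T, t ∈ C' i := by
    intro T hTP hTcard hTanti i
    have hgmem : ∀ t : {x // x ∈ T}, ∃ i, (t : α) ∈ C' i := fun t => hcov t (hTP t.2)
    choose g hg using hgmem
    have ginj : Function.Injective g := by
      intro a b hab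
      by_contra hne'
      have hvne : (a : α) ≠ (b : α) := fun h => hne' (Subtype.ext h)
      rcases hch (g a) a (hg a) b (hab ▸ hg b) with h | h
      · exact hTanti a a.2 b b.2 hvne h
      · exact hTanti b b.2 a a.2 (Ne.symm hvne) h
    have hcardeq : Fintype.card {x // x ∈ T} = Fintype.card (Fin k') := by
      simp [Fintype.card_coe, hTcard]
    have gsurj : Function.Surjective g :=
      ((Fintype.bijective_iff_injective_and_card g).2 ⟨ginj, hcardeq⟩).2
    obtain ⟨t, ht⟩ := gsurj i
    exact ⟨t, t.2, ht ▸ hg t⟩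
  -- maximal good element of each chain
  have hGx : ∀ i : Fin k', ∃ x, x ∈ C' i ∧ good x ∧ ∀ z ∈ C' i, good z → z ≤ x := by
    intro i
    have hGne : ((C' i).filter good).Nonempty := by
      obtain ⟨t, htS', hti⟩ := hmeet S' hS'P hS'card hS'anti i
      exact ⟨t, Finset.mem_filter.2 ⟨hti, ⟨S', hS'P, hS'card, hS'anti, htS'⟩⟩⟩
    obtain ⟨x, hx, hxmax⟩ : ∃ x ∈ (C' i).filter good, ∀ z ∈ (C' i).filter good, ¬ x < z := by
      obtain ⟨x, hx⟩ := Finset.exists_maximal hGne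
      exact ⟨x, hx.1, fun z hz hlt => hlt.not_ge (hx.2 hz hlt.le)⟩
    have hxC := (Finset.mem_filter.1 hx).1
    have hxg := (Finset.mem_filter.1 hx).2
    refine ⟨x, hxC, hxg, ?_⟩
    intro z hz hzg
    rcases hch i z hz x hxC with h | h
    · exact h
    · rcases eq_or_lt_of_le h with h' | h'
      · exact le_of_eq h'.symm
      · exact absurd h' (hxmax z (Finset.mem_filter.2 ⟨hz, hzg⟩))
  choose x hxC hxgood hxmax using hGx
  have xinj : Function.Injective x := by
    intro i j hij
    by_contra hne'
    exact (Finset.disjoint_left.1 (hdisj i j hne')) (hxC i) (hij ▸ hxC j)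
  have hXanti : ∀ i j : Fin k', x i ≠ x j → ¬ x i ≤ x j := by
    intro i j hne' hle
    obtain ⟨T, hTP, hTcard, hTanti, hxjT⟩ := hxgood j
    obtain ⟨t, htT, hti⟩ := hmeet T hTP hTcard hTanti i
    have htgood : good t := ⟨T, hTP, hTcard, hTanti, htT⟩
    have htle : t ≤ x i := hxmax i t hti htgood
    by_cases htxj : t = x j
    · exact hne' (le_antisymm hle (htxj ▸ htle))
    · exact hTanti t htT (x j) hxjT htxj (htle.trans hle)
  set X : Finset α := Finset.image x Finset.univ with hXdef
  have hXcard : X.card = k' := by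
    rw [hXdef, Finset.card_image_of_injective _ xinj, Finset.card_univ, Fintype.card_fin]
  have hXP' : X ⊆ P' := by
    intro v hv
    obtain ⟨i, _, rfl⟩ := Finset.mem_image.1 hv
    exact hsub i (hxC i)
  have hXantichain : ∀ u ∈ X, ∀ v ∈ X, u ≠ v → ¬ u ≤ v := by
    intro u hu v hv huv
    obtain ⟨i, _, rfl⟩ := Finset.mem_image.1 hu
    obtain ⟨j, _, rfl⟩ := Finset.mem_image.1 hv
    exact hXanti i j huv
  by_cases hcase : ∃ i, x i ≤ m
  · -- Case 1: some maximal good element is below m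
    obtain ⟨i, hxim⟩ := hcase
    set K : Finset α := insert m ((C' i).filter (· ≤ x i)) with hKdef
    have hmK : m ∈ K := Finset.mem_insert_self _ _
    have hKP : K ⊆ P := by
      intro z hz
      rcases Finset.mem_insert.1 hz with rfl | hz'
      · exact hmP
      · exact hP'P (hsub i (Finset.mem_filter.1 hz').1)
    have hssub : P \ K ⊂ P := by
      refine ⟨Finset.sdiff_subset, fun h => ?_⟩
      exact (Finset.mem_sdiff.1 (h hmP)).2 hmK
    obtain ⟨k'', C'', S'', h2ne, h2ch, h2disj, h2sub, h2cov, h2SP, h2Scard, h2Santi⟩ :=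
      IH _ hssub
    have hPKsubP' : P \ K ⊆ P' := by
      intro v hv
      obtain ⟨hv1, hv2⟩ := Finset.mem_sdiff.1 hv
      exact Finset.mem_erase.2 ⟨fun h => hv2 (h ▸ hmK), hv1⟩
    have hk'' : k'' < k' := by
      by_contra hge
      push_neg at hge
      obtain ⟨T, hTS'', hTcard⟩ := Finset.exists_subset_card_eq (hge.trans_eq h2Scard.symm)
      have hTP' : T ⊆ P' := fun v hv => hPKsubP' (h2SP (hTS'' hv))
      have hTanti : ∀ a ∈ T, ∀ b ∈ T, a ≠ b → ¬ a ≤ b := fun a ha b hb =>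
        h2Santi a (hTS'' ha) b (hTS'' hb)
      obtain ⟨t, htT, hti⟩ := hmeet T hTP' hTcard hTanti i
      have htgood : good t := ⟨T, hTP', hTcard, hTanti, htT⟩
      have htle : t ≤ x i := hxmax i t hti htgood
      have htK : t ∈ K := Finset.mem_insert.2 (Or.inr (Finset.mem_filter.2 ⟨hti, htle⟩))
      exact (Finset.mem_sdiff.1 (h2SP (hTS'' htT))).2 htK
    obtain ⟨S, hSX, hScard⟩ :=
      Finset.exists_subset_card_eq (show k'' + 1 ≤ X.card by rw [hXcard]; omega)
    refine ⟨k'' + 1, Fin.cons K C'', S, ?_, ?_, ?_, ?_, ?_, ?_, hScard, ?_⟩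
    · intro j
      refine Fin.cases ?_ ?_ j
      · exact ⟨m, hmK⟩
      · exact h2ne
    · intro j
      refine Fin.cases ?_ ?_ j
      · simp only [Fin.cons_zero]
        intro a ha b hb
        rcases Finset.mem_insert.1 ha with rfl | ha' <;>
          rcases Finset.mem_insert.1 hb with rfl | hb'
        · exact Or.inl le_rfl
        · exact Or.inr ((Finset.mem_filter.1 hb').2.trans hxim)
        · exact Or.inl ((Finset.mem_filter.1 ha').2.trans hxim)
        · exact hch i a (Finset.mem_filter.1 ha').1 b (Finset.mem_filter.1 hb').1
      · intro j'
        simpa using h2ch j'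
    · intro a b
      have hdj : ∀ j' : Fin k'', Disjoint K (C'' j') := by
        intro j'
        rw [Finset.disjoint_left]
        intro z hzK hzC
        exact (Finset.mem_sdiff.1 (h2sub j' hzC)).2 hzK
      refine Fin.cases ?_ ?_ a
      · refine Fin.cases ?_ ?_ b
        · intro h; exact absurd rfl h
        · intro b' _; simpa using hdj b'
      · intro a'
        refine Fin.cases ?_ ?_ b
        · intro _; simpa using (hdj a').symm
        · intro b' h
          have hne' : a' ≠ b' := fun hh => h (by rw [hh])
          simpa using h2disj a' b' hne'
    · intro j
      refine Fin.cases ?_ ?_ j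
      · simpa using hKP
      · intro j'
        simpa using (h2sub j').trans Finset.sdiff_subset
    · intro v hv
      by_cases hvK : v ∈ K
      · exact ⟨0, by simpa using hvK⟩
      · obtain ⟨j', hj'⟩ := h2cov v (Finset.mem_sdiff.2 ⟨hv, hvK⟩)
        exact ⟨j'.succ, by simpa using hj'⟩
    · exact (hSX.trans hXP').trans hP'P
    · intro a ha b hb
      exact hXantichain a (hSX ha) b (hSX hb)
  · -- Case 2: no maximal good element is below m
    push_neg at hcase
    have hmX : m ∉ X := fun h => Finset.notMem_erase m P (hXP' h)
    refine ⟨k' + 1, Fin.cons {m} C', insert m X, ?_, ?_, ?_, ?_, ?_, ?_, ?_, ?_⟩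
    · intro j
      refine Fin.cases ?_ ?_ j
      · exact ⟨m, Finset.mem_singleton_self m⟩
      · exact hne
    · intro j
      refine Fin.cases ?_ ?_ j
      · simp only [Fin.cons_zero]
        intro a ha b hb
        rw [Finset.mem_singleton] at ha hb
        subst ha; subst hb; exact Or.inl le_rfl
      · intro j'
        simpa using hch j'
    · intro a b
      have hdj : ∀ j' : Fin k', Disjoint ({m} : Finset α) (C' j') := by
        intro j'
        rw [Finset.disjoint_left]
        intro z hz hzC
        rw [Finset.mem_singleton] at hz
        subst hz
        exact Finset.notMem_erase z P (hsub j' hzC)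
      refine Fin.cases ?_ ?_ a
      · refine Fin.cases ?_ ?_ b
        · intro h; exact absurd rfl h
        · intro b' _; simpa using hdj b'
      · intro a'
        refine Fin.cases ?_ ?_ b
        · intro _; simpa using (hdj a').symm
        · intro b' h
          have hne' : a' ≠ b' := fun hh => h (by rw [hh])
          simpa using hdisj a' b' hne'
    · intro j
      refine Fin.cases ?_ ?_ j
      · simpa using hmP
      · intro j'
        simpa using (hsub j').trans hP'P
    · intro v hv
      by_cases hvm : v = m
      · exact ⟨0, by simp [hvm]⟩
      · obtain ⟨j', hj'⟩ := hcov v (Finset.mem_erase.2 ⟨hvm, hv⟩)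
        exact ⟨j'.succ, by simpa using hj'⟩
    · exact Finset.insert_subset hmP (hXP'.trans hP'P)
    · rw [Finset.card_insert_of_notMem hmX, hXcard]
    · intro a ha b hb hab
      rcases Finset.mem_insert.1 ha with rfl | haX <;>
        rcases Finset.mem_insert.1 hb with rfl | hbX
      · exact absurd rfl hab
      · -- a = m, b ∈ X : ¬ m ≤ b
        intro hle
        exact hmax b (hP'P (hXP' hbX)) (lt_of_le_of_ne hle hab)
      · -- a ∈ X, b = m : ¬ a ≤ m
        obtain ⟨j, _, rfl⟩ := Finset.mem_image.1 haX
        exact hcase j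
      · exact hXantichain a haX b hbX hab

end Dilworth

section ChainToPath

variable {α : Type*} [PartialOrder α] {A : α → α → Prop}

/-- A finite chain with least element `m` is covered by an `A`-chain list starting at `m`. -/
lemma dag_cover_chain (hA : ∀ x y : α, x ≤ y ↔ ReflTransGen A x y) :
    ∀ (n : ℕ) (C : Finset α) (m : α), C.card ≤ n → m ∈ C → (∀ z ∈ C, m ≤ z) →
      (∀ a ∈ C, ∀ b ∈ C, a ≤ b ∨ b ≤ a) →
      ∃ l : List α, List.Chain A m l ∧ ∀ v ∈ C, v ∈ m :: l := by
  classical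
  intro n
  induction n with
  | zero =>
      intro C m hcard hm _ _
      rw [Nat.le_zero, Finset.card_eq_zero] at hcard
      exact absurd (hcard ▸ hm) (Finset.notMem_empty m)
  | succ n ih =>
      intro C m hcard hm hmin hch
      set C' := C.erase m with hC'def
      rcases C'.eq_empty_or_nonempty with h0 | hne
      · refine ⟨[], List.Chain.nil, ?_⟩
        intro v hv
        by_cases hvm : v = m
        · simp [hvm]
        · exact absurd (h0 ▸ Finset.mem_erase.2 ⟨hvm, hv⟩) (Finset.notMem_empty v)
      · obtain ⟨m', hm'C', hm'min⟩ : ∃ m' ∈ C', ∀ z ∈ C', ¬ z < m' := by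
          obtain ⟨m', hm⟩ := C'.exists_minimal hne
          exact ⟨m', hm.1, fun z hz hlt => hlt.not_ge (hm.2 hz hlt.le)⟩
        have hm'C : m' ∈ C := Finset.mem_of_mem_erase hm'C'
        have hm'le : ∀ z ∈ C', m' ≤ z := by
          intro z hz
          rcases hch m' hm'C z (Finset.mem_of_mem_erase hz) with h | h
          · exact h
          · rcases eq_or_lt_of_le h with h' | h'
            · exact le_of_eq h'.symm
            · exact absurd h' (hm'min z hz)
        have hmm' : m ≤ m' := hmin m' hm'C
        have hnem : m ≠ m' := Ne.symm (Finset.mem_erase.1 hm'C').1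
        obtain ⟨p, hp, hplast⟩ := List.exists_isChain_cons_of_relationReflTransGen ((hA m m').1 hmm')
        have hpne : p ≠ [] := by
          rintro rfl
          exact hnem (by simpa using hplast)
        have hcard' : C'.card ≤ n := by
          have h1 : C'.card = C.card - 1 := by rw [hC'def]; exact Finset.card_erase_of_mem hm
          have h2 : 0 < C.card := Finset.card_pos.2 ⟨m, hm⟩
          omega
        have hchain' : ∀ a ∈ C', ∀ b ∈ C', a ≤ b ∨ b ≤ a := fun a ha b hb =>
          hch a (Finset.mem_of_mem_erase ha) b (Finset.mem_of_mem_erase hb)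
        obtain ⟨l', hl', hl'cov⟩ := ih C' m' hcard' hm'C' hm'le hchain'
        refine ⟨p ++ l', ?_, ?_⟩
        · have h1 : List.Chain' A (m :: p) := hp
          have h2 : List.Chain' A (m' :: l') := hl'
          have h2t : List.Chain' A l' := h2.tail
          have hjunc : ∀ a ∈ (m :: p).getLast?, ∀ b ∈ l'.head?, A a b := by
            intro a ha b hb
            rw [List.getLast?_eq_getLast (List.cons_ne_nil _ _), Option.mem_def,
              Option.some_inj] at ha
            subst ha
            rw [hplast]
            cases l' with
            | nil => simp at hb
            | cons y t =>
                rw [List.head?_cons, Option.mem_def, Option.some_inj] at hb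
                subst hb
                exact (List.chain_cons.1 h2).1
          have h3 : List.Chain' A ((m :: p) ++ l') := List.IsChain.append h1 h2t hjunc
          exact h3
        · intro v hv
          by_cases hvm : v = m
          · simp [hvm]
          · have hvC' : v ∈ C' := Finset.mem_erase.2 ⟨hvm, hv⟩
            rcases List.mem_cons.1 (hl'cov v hvC') with rfl | hvl'
            · have : v ∈ m :: p := hplast ▸ List.getLast_mem (List.cons_ne_nil _ _)
              rcases List.mem_cons.1 this with h | h
              · exact List.mem_cons.2 (Or.inl h)
              · exact List.mem_cons.2 (Or.inr (List.mem_append.2 (Or.inl h)))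
            · exact List.mem_cons.2 (Or.inr (List.mem_append.2 (Or.inr hvl')))

end ChainToPath

/-- Dilworth's theorem for finite DAGs: the minimum number of directed paths covering all
vertices equals the maximum size of an antichain (a set of pairwise unreachable vertices). -/
theorem dag_min_path_cover_eq_max_antichain {V : Type*} [Fintype V] (A : V → V → Prop)
    (hacyclic : ∀ v : V, ¬ Relation.TransGen A v v) :
    ∃ k : ℕ,
      IsLeast {m | ∃ C : Fin m → DiPath A, ∀ v : V, ∃ i, v ∈ Set.range (C i).verts} k ∧
      IsGreatest {m | ∃ S : Finset V, S.card = m ∧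
        (S : Set V).Pairwise fun u v => ¬ Relation.ReflTransGen A u v} k := by
  classical
  letI : PartialOrder V :=
    { le := ReflTransGen A
      le_refl := fun _ => ReflTransGen.refl
      le_trans := fun _ _ _ h1 h2 => Relation.ReflTransGen.trans h1 h2
      le_antisymm := by
        intro a b h1 h2
        by_contra hne
        rcases h1.cases_head with rfl | ⟨c, hac, hcb⟩
        · exact hne rfl
        · exact hacyclic b (Relation.TransGen.trans_right h2
            (Relation.TransGen.head' hac hcb)) }
  have hA : ∀ x y : V, x ≤ y ↔ ReflTransGen A x y := fun _ _ => Iff.rfl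
  obtain ⟨k, C, S, hne, hch, hdisj, hsub, hcov, hSP, hScard, hSanti⟩ :=
    dilworth_finset (Finset.univ : Finset V)
  have hpaths : ∀ i : Fin k, ∃ p : DiPath A, ∀ v ∈ C i, v ∈ Set.range p.verts := by
    intro i
    obtain ⟨m, hmC, hmmin⟩ : ∃ m ∈ C i, ∀ z ∈ C i, ¬ z < m := by
      obtain ⟨m, hm⟩ := (C i).exists_minimal (hne i)
      exact ⟨m, hm.1, fun z hz hlt => hlt.not_ge (hm.2 hz hlt.le)⟩
    have hmle : ∀ z ∈ C i, m ≤ z := by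
      intro z hz
      rcases hch i m hmC z hz with h | h
      · exact h
      · rcases eq_or_lt_of_le h with h' | h'
        · exact le_of_eq h'.symm
        · exact absurd h' (hmmin z hz)
    obtain ⟨l, hl, hlcov⟩ := dag_cover_chain hA (C i).card (C i) m le_rfl hmC hmle (hch i)
    obtain ⟨p, hp⟩ := dag_list_to_path hacyclic (m :: l) (List.cons_ne_nil _ _) hl
    exact ⟨p, fun v hv => hp v (hlcov v hv)⟩
  choose paths hpathscov using hpaths
  have hcover : ∀ v : V, ∃ i, v ∈ Set.range (paths i).verts := by
    intro v
    obtain ⟨i, hi⟩ := hcov v (Finset.mem_univ v)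
    exact ⟨i, hpathscov i v hi⟩
  refine ⟨k, ⟨⟨paths, hcover⟩, ?_⟩, ⟨⟨S, hScard, ?_⟩, ?_⟩⟩
  · rintro mm ⟨Cm, hCm⟩
    rw [← hScard]
    exact dag_anti_le_cover hSanti Cm hCm
  · intro u hu v hv huv
    exact hSanti u (Finset.mem_coe.1 hu) v (Finset.mem_coe.1 hv) huv
  · rintro mm ⟨S', hS'card, hS'pair⟩
    rw [← hS'card]
    exact dag_anti_le_cover
      (fun a ha b hb hab => hS'pair (Finset.mem_coe.2 ha) (Finset.mem_coe.2 hb) hab)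
      paths hcover
end

section
/- Let 𝒯 = (T, λ) be a temporal oriented tree, let G be its connectivity graph, and let S be a set of vertices of 𝒯. Then S is contained in the vertex set of some temporal path of 𝒯 if and only if S is contained in a clique of G (i.e., the vertices of S are pairwise adjacent in G). -/
/-! A temporal digraph on vertex set `V` is encoded by its arc-labeling
`lab : V → V → Finset ℕ`: there is an arc `u → v` iff `lab u v` is nonempty,
and `lab u v` is the (finite) set of time-steps at which the arc `u → v` is active. -/

/-- A temporal (directed) path: vertices `verts 0, …, verts len`, pairwise distinct,
traversed at strictly increasing times `times 0 < … < times (len-1)`, each arc being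
active at the time it is traversed. A single vertex (`len = 0`) is a temporal path. -/
structure TPath {V : Type*} (lab : V → V → Finset ℕ) where
  len : ℕ
  verts : Fin (len + 1) → V
  times : Fin len → ℕ
  inj : Function.Injective verts
  mono : StrictMono times
  mem_lab : ∀ i : Fin len, times i ∈ lab (verts i.castSucc) (verts i.succ)

/-- The set of vertices lying on a temporal path. -/
def TPath.vertexSet {V : Type*} {lab : V → V → Finset ℕ} (P : TPath lab) : Set V :=
  Set.range P.verts

/-- `P` is a temporal path from `u` to `v`. -/
def TPath.FromTo {V : Type*} {lab : V → V → Finset ℕ} (P : TPath lab) (u v : V) : Prop :=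
  P.verts 0 = u ∧ P.verts (Fin.last P.len) = v

/-- Two vertices are temporally connected if some temporal path contains both of them. -/
def TempConnected {V : Type*} (lab : V → V → Finset ℕ) (u v : V) : Prop :=
  ∃ P : TPath lab, u ∈ P.vertexSet ∧ v ∈ P.vertexSet

/-- A temporal antichain: a set of pairwise not temporally connected vertices. -/
def IsTempAntichain {V : Type*} (lab : V → V → Finset ℕ) (S : Set V) : Prop :=
  S.Pairwise fun u v => ¬ TempConnected lab u v

/-- A family of temporal paths is a temporal path cover if every vertex lies on some path. -/
def IsTPC {V : Type*} (lab : V → V → Finset ℕ) {m : ℕ} (C : Fin m → TPath lab) : Prop :=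
  ∀ v : V, ∃ i, v ∈ (C i).vertexSet

/-- Two temporal paths are temporally disjoint if any two of their arcs sharing an
end-vertex are traversed at distinct time-steps. -/
def TDisjoint {V : Type*} {lab : V → V → Finset ℕ} (P Q : TPath lab) : Prop :=
  ∀ i : Fin P.len, ∀ j : Fin Q.len,
    (P.verts i.castSucc = Q.verts j.castSucc ∨ P.verts i.castSucc = Q.verts j.succ ∨
     P.verts i.succ = Q.verts j.castSucc ∨ P.verts i.succ = Q.verts j.succ) →
    P.times i ≠ Q.times j

/-- The set of possible cardinalities of temporal path covers. -/
def tpcSizes {V : Type*} (lab : V → V → Finset ℕ) : Set ℕ :=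
  {m | ∃ C : Fin m → TPath lab, IsTPC lab C}

/-- The set of possible cardinalities of temporally disjoint path covers. -/
def tdpcSizes {V : Type*} (lab : V → V → Finset ℕ) : Set ℕ :=
  {m | ∃ C : Fin m → TPath lab, IsTPC lab C ∧ ∀ i j, i ≠ j → TDisjoint (C i) (C j)}

/-- The set of possible cardinalities of temporal antichains. -/
def antichainSizes {V : Type*} (lab : V → V → Finset ℕ) : Set ℕ :=
  {m | ∃ S : Finset V, S.card = m ∧ IsTempAntichain lab ↑S}

/-- The underlying undirected graph (forget orientations and labels). -/
def underlyingGraph {V : Type*} (lab : V → V → Finset ℕ) : SimpleGraph V where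
  Adj u v := u ≠ v ∧ ((lab u v).Nonempty ∨ (lab v u).Nonempty)
  symm := ⟨by intro u v h; exact ⟨h.1.symm, h.2.symm⟩⟩
  loopless := ⟨by intro v h; exact h.1 rfl⟩

/-- All time labels are positive integers. -/
def PositiveLabels {V : Type*} (lab : V → V → Finset ℕ) : Prop :=
  ∀ u v : V, ∀ t ∈ lab u v, 0 < t

/-- A temporal oriented tree: the underlying undirected graph is a tree and the digraph is
an orientation of it (no pair of opposite arcs, no loops). -/
def IsTemporalOrientedTree {V : Type*} (lab : V → V → Finset ℕ) : Prop :=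
  (underlyingGraph lab).IsTree ∧ ∀ u v : V, (lab u v).Nonempty → lab v u = ∅

/-- The connectivity graph: two distinct vertices are adjacent iff temporally connected. -/
def connGraph {V : Type*} (lab : V → V → Finset ℕ) : SimpleGraph V where
  Adj u v := u ≠ v ∧ TempConnected lab u v
  symm := ⟨by intro u v h; exact ⟨h.1.symm, h.2.imp fun P hP => ⟨hP.2, hP.1⟩⟩⟩
  loopless := ⟨by intro v h; exact h.1 rfl⟩

/-- `c` lists the vertices of an induced cycle of length `n` of `G`, in cyclic order:
the listed vertices are distinct and two of them are adjacent iff they are cyclically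
consecutive. -/
def IsInducedCycle {V : Type*} (G : SimpleGraph V) (n : ℕ) (c : Fin n → V) : Prop :=
  Function.Injective c ∧
    ∀ i j : Fin n, G.Adj (c i) (c j) ↔ ((i.val + 1) % n = j.val ∨ (j.val + 1) % n = i.val)

/-- A hole: an induced cycle of length at least 5. -/
def HasHole {V : Type*} (G : SimpleGraph V) : Prop :=
  ∃ n, 5 ≤ n ∧ ∃ c : Fin n → V, IsInducedCycle G n c

/-- An anti-hole: an induced subgraph whose complement is a cycle of length at least 5. -/
def HasAntihole {V : Type*} (G : SimpleGraph V) : Prop :=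
  ∃ n, 5 ≤ n ∧ ∃ c : Fin n → V, IsInducedCycle Gᶜ n c

/-- A graph is weakly chordal if it has no hole and no anti-hole. -/
def WeaklyChordal {V : Type*} (G : SimpleGraph V) : Prop :=
  ¬ HasHole G ∧ ¬ HasAntihole G


section Walks

open SimpleGraph

variable {V : Type*} {G : SimpleGraph V}

/-- A path given as an index function on `[0, n]`. -/
def IsPathFun (G : SimpleGraph V) (n : ℕ) (f : ℕ → V) : Prop :=
  (∀ i, i < n → G.Adj (f i) (f (i+1))) ∧ ∀ i j, i ≤ n → j ≤ n → f i = f j → i = j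

def mkWalk (G : SimpleGraph V) :
    ∀ (n : ℕ) (f : ℕ → V), (∀ i, i < n → G.Adj (f i) (f (i+1))) → G.Walk (f 0) (f n)
  | 0, _, _ => SimpleGraph.Walk.nil
  | (n+1), f, h =>
      SimpleGraph.Walk.cons (h 0 (Nat.succ_pos n))
        (mkWalk G n (fun i => f (i+1)) (fun i hi => h (i+1) (by omega)))

lemma mkWalk_length (G : SimpleGraph V) :
    ∀ (n : ℕ) (f : ℕ → V) (h : ∀ i, i < n → G.Adj (f i) (f (i+1))),
      (mkWalk G n f h).length = n
  | 0, _, _ => rfl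
  | (n+1), f, h => by
      simp [mkWalk, mkWalk_length G n]

lemma mkWalk_getVert (G : SimpleGraph V) :
    ∀ (n : ℕ) (f : ℕ → V) (h : ∀ i, i < n → G.Adj (f i) (f (i+1))) (i : ℕ), i ≤ n →
      (mkWalk G n f h).getVert i = f i
  | 0, f, h, i, hi => by
      have : i = 0 := by omega
      subst this; exact Walk.getVert_zero _
  | (n+1), f, h, 0, _ => Walk.getVert_zero _
  | (n+1), f, h, (i+1), hi => by
      have := mkWalk_getVert G n (fun m => f (m+1)) (fun m hm => h (m+1) (by omega)) i (by omega)
      simpa [mkWalk, Walk.getVert_cons_succ] using this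

lemma mkWalk_mem_support (G : SimpleGraph V) :
    ∀ (n : ℕ) (f : ℕ → V) (h : ∀ i, i < n → G.Adj (f i) (f (i+1))) (x : V),
      x ∈ (mkWalk G n f h).support ↔ ∃ i, i ≤ n ∧ f i = x
  | 0, f, h, x => by
      simp only [mkWalk, Walk.support_nil, List.mem_singleton]
      constructor
      · rintro rfl; exact ⟨0, le_rfl, rfl⟩
      · rintro ⟨i, hi, rfl⟩; rw [show i = 0 by omega]
  | (n+1), f, h, x => by
      rw [show (mkWalk G (n+1) f h) = SimpleGraph.Walk.cons (h 0 (Nat.succ_pos n))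
        (mkWalk G n (fun i => f (i+1)) (fun i hi => h (i+1) (by omega))) from rfl]
      rw [Walk.support_cons, List.mem_cons, mkWalk_mem_support G n]
      constructor
      · rintro (rfl | ⟨i, hi, rfl⟩)
        · exact ⟨0, by omega, rfl⟩
        · exact ⟨i+1, by omega, rfl⟩
      · rintro ⟨i, hi, rfl⟩
        rcases i with _ | i
        · exact Or.inl rfl
        · exact Or.inr ⟨i, by omega, rfl⟩

lemma mkWalk_isPath (G : SimpleGraph V) :
    ∀ (n : ℕ) (f : ℕ → V) (h : ∀ i, i < n → G.Adj (f i) (f (i+1)))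
      (hinj : ∀ i j, i ≤ n → j ≤ n → f i = f j → i = j),
      (mkWalk G n f h).IsPath
  | 0, f, h, hinj => by simp [mkWalk]
  | (n+1), f, h, hinj => by
      rw [show (mkWalk G (n+1) f h) = SimpleGraph.Walk.cons (h 0 (Nat.succ_pos n))
        (mkWalk G n (fun i => f (i+1)) (fun i hi => h (i+1) (by omega))) from rfl]
      refine (Walk.cons_isPath_iff _ _).2 ⟨mkWalk_isPath G n _ _ ?_, ?_⟩
      · intro i j hi hj he
        have := hinj (i+1) (j+1) (by omega) (by omega) he
        omega
      · rw [mkWalk_mem_support]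
        rintro ⟨i, hi, he⟩
        have := hinj (i+1) 0 (by omega) (by omega) he
        omega

lemma pathFun_unique (hT : G.IsTree) {n m : ℕ} {f g : ℕ → V}
    (hf : IsPathFun G n f) (hg : IsPathFun G m g)
    (h0 : f 0 = g 0) (h1 : f n = g m) : n = m ∧ ∀ i, i ≤ n → f i = g i := by
  have hwf : (mkWalk G n f hf.1).IsPath := mkWalk_isPath G n f hf.1 hf.2
  have hwg : ((mkWalk G m g hg.1).copy h0.symm h1.symm).IsPath := by
    simpa using mkWalk_isPath G m g hg.1 hg.2
  have he : mkWalk G n f hf.1 = (mkWalk G m g hg.1).copy h0.symm h1.symm :=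
    (hT.existsUnique_path (f 0) (f n)).unique hwf hwg
  have hlen : n = m := by
    have := congrArg Walk.length he
    rwa [mkWalk_length, Walk.length_copy, mkWalk_length] at this
  refine ⟨hlen, fun i hi => ?_⟩
  have := congrArg (fun w => Walk.getVert w i) he
  simp only [Walk.getVert_copy] at this
  rwa [mkWalk_getVert G n f hf.1 i hi, mkWalk_getVert G m g hg.1 i (by omega)] at this

lemma pathFun_length_eq_dist (hT : G.IsTree) {n : ℕ} {f : ℕ → V}
    (hf : IsPathFun G n f) : n = G.dist (f 0) (f n) := by
  classical
  have h1 : G.dist (f 0) (f n) ≤ n := by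
    simpa [mkWalk_length] using SimpleGraph.dist_le (mkWalk G n f hf.1)
  obtain ⟨p, hp⟩ := hT.isConnected.exists_walk_length_eq_dist (f 0) (f n)
  have he : p.bypass = mkWalk G n f hf.1 :=
    (hT.existsUnique_path (f 0) (f n)).unique p.bypass_isPath (mkWalk_isPath G n f hf.1 hf.2)
  have h2 : n ≤ p.length := by
    have := Walk.length_bypass_le p
    rw [he, mkWalk_length] at this
    exact this
  omega

lemma IsPathFun.rev {n : ℕ} {f : ℕ → V} (h : IsPathFun G n f) :
    IsPathFun G n (fun m => f (n - m)) := by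
  constructor
  · intro i hi
    have h1 := (h.1 (n - i - 1) (by omega)).symm
    have e1 : n - i = n - i - 1 + 1 := by omega
    have e2 : n - (i+1) = n - i - 1 := by omega
    show G.Adj (f (n - i)) (f (n - (i+1)))
    rw [e1, e2]
    exact h1
  · intro i j hi hj he
    have := h.2 (n - i) (n - j) (by omega) (by omega) (by simpa using he)
    omega

end Walks

section Temporal

variable {V : Type*} {lab : V → V → Finset ℕ}

/-- The trivial one-vertex temporal path. -/
def trivTPath (lab : V → V → Finset ℕ) (x : V) : TPath lab where
  len := 0
  verts := fun _ => x
  times := fun i => i.elim0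
  inj := fun a b _ => Fin.ext (by omega)
  mono := by intro a; exact a.elim0
  mem_lab := fun i => i.elim0

lemma tempConn_pathFun
    (horient : ∀ u v : V, (lab u v).Nonempty → lab v u = ∅)
    {a b : V} (h : TempConnected lab a b) (hab : a ≠ b) :
    ∃ (N : ℕ) (F : ℕ → V) (R : TPath lab),
      IsPathFun (underlyingGraph lab) N F ∧ F 0 = a ∧ F N = b ∧
      (∀ i, i ≤ N → F i ∈ R.vertexSet) ∧
      (∀ k, 0 < k → k < N →
        ((lab (F (k-1)) (F k)).Nonempty ∧ lab (F (k+1)) (F k) = ∅) ∨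
        ((lab (F (k+1)) (F k)).Nonempty ∧ lab (F (k-1)) (F k) = ∅)) := by
  obtain ⟨P, ha, hb⟩ := h
  obtain ⟨i, hi⟩ := ha
  obtain ⟨j, hj⟩ := hb
  -- core one-directional construction
  have core : ∀ (c d : ℕ) (hc : c ≤ P.len) (hd : d ≤ P.len), c < d →
      ∃ (F : ℕ → V),
        (∀ m m', m ≤ d - c → m' ≤ d - c → F m = F m' → m = m') ∧
        F 0 = P.verts ⟨c, by omega⟩ ∧ F (d - c) = P.verts ⟨d, by omega⟩ ∧
        (∀ m, F m ∈ P.vertexSet) ∧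
        (∀ k, k < d - c → (lab (F k) (F (k+1))).Nonempty) := by
    intro c d hc hd hcd
    refine ⟨fun m => P.verts ⟨min (c + m) d, by omega⟩, ?_, ?_, ?_, ?_, ?_⟩
    · intro m m' hm hm' he
      have := P.inj he
      have h2 : min (c + m) d = min (c + m') d := congrArg Fin.val this
      omega
    · exact congrArg P.verts (Fin.ext (by simp; omega))
    · exact congrArg P.verts (Fin.ext (by simp; omega))
    · intro m; exact ⟨_, rfl⟩
    · intro k hk
      have hck : c + k < P.len := by omega
      have hmem := P.mem_lab ⟨c + k, hck⟩
      refine ⟨P.times ⟨c + k, hck⟩, ?_⟩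
      have e1 : P.verts ⟨min (c + k) d, by omega⟩
          = P.verts ((⟨c + k, hck⟩ : Fin P.len).castSucc) :=
        congrArg P.verts (Fin.ext (by simp; omega))
      have e2 : P.verts ⟨min (c + (k+1)) d, by omega⟩
          = P.verts ((⟨c + k, hck⟩ : Fin P.len).succ) :=
        congrArg P.verts (Fin.ext (by simp; omega))
      show P.times ⟨c + k, hck⟩ ∈ lab (P.verts ⟨min (c + k) d, by omega⟩)
        (P.verts ⟨min (c + (k+1)) d, by omega⟩)
      rw [e1, e2]
      exact hmem
  have hij : i.val ≠ j.val := by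
    intro e
    exact hab (hi ▸ hj ▸ congrArg P.verts (Fin.ext e))
  rcases Nat.lt_or_ge i.val j.val with hlt | hge
  · -- forward
    obtain ⟨F, Finj, F0, FN, Fmem, Flab⟩ :=
      core i.val j.val (by omega) (by omega) hlt
    set N := j.val - i.val with hN
    have hadj : ∀ k, k < N → (underlyingGraph lab).Adj (F k) (F (k+1)) := by
      intro k hk
      refine ⟨fun e => by have := Finj k (k+1) (by omega) (by omega) e; omega,
        Or.inl (Flab k hk)⟩
    refine ⟨N, F, P, ⟨hadj, Finj⟩, F0.trans ((congrArg P.verts (Fin.ext rfl)).trans hi), FN.trans ((congrArg P.verts (Fin.ext rfl)).trans hj),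
      fun m _ => Fmem m, ?_⟩
    intro k hk1 hk2
    left
    constructor
    · have := Flab (k-1) (by omega)
      rwa [show k - 1 + 1 = k by omega] at this
    · exact horient _ _ (Flab k hk2)
  · -- backward
    have hlt : j.val < i.val := by omega
    obtain ⟨F, Finj, F0, FN, Fmem, Flab⟩ :=
      core j.val i.val (by omega) (by omega) hlt
    set N := i.val - j.val with hN
    refine ⟨N, fun m => F (N - m), P, ⟨?_, ?_⟩, ?_, ?_, fun m _ => Fmem _, ?_⟩
    · intro k hk
      show (underlyingGraph lab).Adj (F (N - k)) (F (N - (k+1)))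
      have e2 : N - (k+1) = N - k - 1 := by omega
      have e1 : N - k = N - k - 1 + 1 := by omega
      rw [e1, e2]
      refine ⟨fun e => ?_, Or.inr (Flab (N - k - 1) (by omega))⟩
      have := Finj (N - k - 1 + 1) (N - k - 1) (by omega) (by omega) e
      omega
    · intro m m' hm hm' he
      have := Finj (N - m) (N - m') (by omega) (by omega) (by simpa using he)
      omega
    · show F (N - 0) = a
      rw [Nat.sub_zero]
      exact FN.trans ((congrArg P.verts (Fin.ext rfl)).trans hi)
    · show F (N - N) = b
      rw [Nat.sub_self]
      exact F0.trans ((congrArg P.verts (Fin.ext rfl)).trans hj)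
    · intro k hk1 hk2
      right
      constructor
      · show (lab (F (N - (k+1))) (F (N - k))).Nonempty
        have e2 : N - (k+1) = N - k - 1 := by omega
        have e1 : N - k = N - k - 1 + 1 := by omega
        rw [e1, e2]
        exact Flab (N - k - 1) (by omega)
      · show lab (F (N - (k-1))) (F (N - k)) = ∅
        have e1 : N - (k-1) = (N - k) + 1 := by omega
        rw [e1]
        exact horient _ _ (Flab (N - k) (by omega))

end Temporal

/-- In a temporal oriented tree, a set of vertices is contained in some temporal path iff
it is a clique of the connectivity graph. -/
theorem subset_tpath_iff_clique {V : Type*} [Fintype V] (lab : V → V → Finset ℕ)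
    (hpos : PositiveLabels lab) (htree : IsTemporalOrientedTree lab) (S : Set V) :
    (∃ P : TPath lab, S ⊆ P.vertexSet) ↔ (connGraph lab).IsClique S := by
  classical
  obtain ⟨hT, horient⟩ := htree
  constructor
  · rintro ⟨P, hP⟩ u hu v hv huv
    exact ⟨huv, P, hP hu, hP hv⟩
  · intro hclq
    set G := underlyingGraph lab with hG
    by_cases hS : ∀ a ∈ S, ∀ b ∈ S, a = b
    · have hne : Nonempty V := hT.isConnected.nonempty
      rcases S.eq_empty_or_nonempty with rfl | ⟨x, hx⟩
      · exact ⟨trivTPath lab (Classical.arbitrary V), Set.empty_subset _⟩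
      · exact ⟨trivTPath lab x, fun y hy => ⟨0, (hS y hy x hx).symm⟩⟩
    · push_neg at hS
      obtain ⟨a0, ha0, b0, hb0, hab0⟩ := hS
      obtain ⟨⟨u, v⟩, huvS, hmax'⟩ := Set.exists_max_image (S ×ˢ S)
        (fun p => G.dist p.1 p.2) (Set.toFinite _) ⟨(a0, b0), ⟨ha0, hb0⟩⟩
      obtain ⟨hu, hv⟩ := huvS
      replace hu : u ∈ S := hu
      replace hv : v ∈ S := hv
      have hmaxd : ∀ a ∈ S, ∀ b ∈ S, G.dist a b ≤ G.dist u v := fun a ha b hb =>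
        hmax' (a, b) ⟨ha, hb⟩
      have hd0 : 0 < G.dist u v :=
        lt_of_lt_of_le (hT.isConnected.pos_dist_of_ne hab0) (hmaxd a0 ha0 b0 hb0)
      have huv : u ≠ v := by
        rintro rfl
        simp [SimpleGraph.dist_self] at hd0
      obtain ⟨N, F, R, hF, hF0, hFN, hFmem, hFPT⟩ :=
        tempConn_pathFun horient (hclq hu hv huv).2 huv
      have hNd : N = G.dist u v := by
        have := pathFun_length_eq_dist hT hF
        rwa [hF0, hFN] at this
      refine ⟨R, fun s hs => ?_⟩
      by_contra hsR
      have hsu : s ≠ u := fun e => hsR (by rw [e, ← hF0]; exact hFmem 0 (Nat.zero_le _))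
      have hsv : s ≠ v := fun e => hsR (by rw [e, ← hFN]; exact hFmem N le_rfl)
      obtain ⟨Nu, fu, Ru, hfu, hfu0, hfuN, hfumem, hfuPT⟩ :=
        tempConn_pathFun horient (hclq hs hu hsu).2 hsu
      obtain ⟨Nv, fv, Rv, hfv, hfv0, hfvN, hfvmem, hfvPT⟩ :=
        tempConn_pathFun horient (hclq hs hv hsv).2 hsv
      have hNud : Nu = G.dist s u := by
        have := pathFun_length_eq_dist hT hfu; rwa [hfu0, hfuN] at this
      have hNvd : Nv = G.dist s v := by
        have := pathFun_length_eq_dist hT hfv; rwa [hfv0, hfvN] at this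
      have hNu1 : 1 ≤ Nu := by
        rcases Nat.eq_zero_or_pos Nu with h0 | h
        · exact absurd (hfu0.symm.trans (h0 ▸ hfuN)) hsu
        · exact h
      have hNv1 : 1 ≤ Nv := by
        rcases Nat.eq_zero_or_pos Nv with h0 | h
        · exact absurd (hfv0.symm.trans (h0 ▸ hfvN)) hsv
        · exact h
      set Pk : ℕ → Prop := fun j => j ≤ Nu ∧ j ≤ Nv ∧ ∀ i ≤ j, fu i = fv i with hPkdef
      set k := Nat.findGreatest Pk (min Nu Nv) with hkdef
      have hPk : Pk k := Nat.findGreatest_spec (Nat.zero_le _)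
        ⟨Nat.zero_le _, Nat.zero_le _, fun i hi => by rw [Nat.le_zero.mp hi, hfu0, hfv0]⟩
      obtain ⟨hkNu, hkNv, hagree⟩ := hPk
      have noremeet : ∀ i j, i ≤ Nu → j ≤ Nv → fu i = fv j → i = j ∧ i ≤ k := by
        intro i j hi hj he
        have h1 : IsPathFun G i fu :=
          ⟨fun m hm => hfu.1 m (by omega),
           fun m m' hm hm' => hfu.2 m m' (by omega) (by omega)⟩
        have h2 : IsPathFun G j fv :=
          ⟨fun m hm => hfv.1 m (by omega),
           fun m m' hm hm' => hfv.2 m m' (by omega) (by omega)⟩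
        obtain ⟨hij, hall⟩ := pathFun_unique hT h1 h2 (hfu0.trans hfv0.symm) he
        refine ⟨hij, ?_⟩
        by_contra hik
        push_neg at hik
        exact Nat.findGreatest_is_greatest hik (by omega) ⟨hi, by omega, fun m hm => hall m hm⟩
      have hkltNu : k < Nu := by
        rcases lt_or_eq_of_le hkNu with h | h
        · exact h
        exfalso
        have hw : fv k = u := by rw [← hagree k le_rfl, h, hfuN]
        have h2 : IsPathFun G (Nv - k) (fun m => fv (k + m)) :=
          ⟨fun m hm => by
            show G.Adj (fv (k + m)) (fv (k + (m + 1)))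
            rw [show k + (m + 1) = (k + m) + 1 by omega]
            exact hfv.1 (k + m) (by omega),
           fun m m' hm hm' he => by
            have := hfv.2 (k + m) (k + m') (by omega) (by omega) he; omega⟩
        have hdist : Nv - k = G.dist u v := by
          have := pathFun_length_eq_dist hT h2
          simpa [hw, show k + (Nv - k) = Nv by omega, hfvN] using this
        have hle : G.dist s v ≤ G.dist u v := hmaxd s hs v hv
        omega
      have hkltNv : k < Nv := by
        rcases lt_or_eq_of_le hkNv with h | h
        · exact h
        exfalso
        have hw : fu k = v := by rw [hagree k le_rfl, h, hfvN]
        have h2 : IsPathFun G (Nu - k) (fun m => fu (k + m)) :=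
          ⟨fun m hm => by
            show G.Adj (fu (k + m)) (fu (k + (m + 1)))
            rw [show k + (m + 1) = (k + m) + 1 by omega]
            exact hfu.1 (k + m) (by omega),
           fun m m' hm hm' he => by
            have := hfu.2 (k + m) (k + m') (by omega) (by omega) he; omega⟩
        have hdist : Nu - k = G.dist v u := by
          have := pathFun_length_eq_dist hT h2
          simpa [hw, show k + (Nu - k) = Nu by omega, hfuN] using this
        have hcomm : G.dist v u = G.dist u v := SimpleGraph.dist_comm
        have hle : G.dist s u ≤ G.dist u v := hmaxd s hs u hu
        omega
      set a := Nu - k with hadef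
      set b := Nv - k with hbdef
      have ha1 : 1 ≤ a := by omega
      have hb1 : 1 ≤ b := by omega
      set g : ℕ → V := fun m => if m ≤ a then fu (Nu - m) else fv (k + (m - a)) with hgdef
      have hgval1 : ∀ m, m ≤ a → g m = fu (Nu - m) := fun m hm => if_pos hm
      have hgval2 : ∀ m, a < m → g m = fv (k + (m - a)) := fun m hm => if_neg (by omega)
      have hgPF : IsPathFun G (a + b) g := by
        constructor
        · intro m hm
          by_cases hma : m + 1 ≤ a
          · rw [hgval1 m (by omega), hgval1 (m + 1) hma]
            have h1 := (hfu.1 (Nu - (m + 1)) (by omega)).symm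
            rw [show Nu - m = Nu - (m + 1) + 1 by omega]
            exact h1
          · by_cases hma2 : m ≤ a
            · have hm' : m = a := by omega
              rw [hgval1 m hma2, hgval2 (m + 1) (by omega)]
              rw [show Nu - m = k by omega, hagree k le_rfl,
                show k + (m + 1 - a) = k + 1 by omega]
              exact hfv.1 k (by omega)
            · rw [hgval2 m (by omega), hgval2 (m + 1) (by omega)]
              rw [show k + (m + 1 - a) = (k + (m - a)) + 1 by omega]
              exact hfv.1 (k + (m - a)) (by omega)
        · intro m m' hm hm' he
          by_cases h1 : m ≤ a <;> by_cases h2 : m' ≤ a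
          · rw [hgval1 m h1, hgval1 m' h2] at he
            have := hfu.2 (Nu - m) (Nu - m') (by omega) (by omega) he; omega
          · rw [hgval1 m h1, hgval2 m' (by omega)] at he
            obtain ⟨e1, e2⟩ := noremeet (Nu - m) (k + (m' - a)) (by omega) (by omega) he
            omega
          · rw [hgval2 m (by omega), hgval1 m' h2] at he
            obtain ⟨e1, e2⟩ := noremeet (Nu - m') (k + (m - a)) (by omega) (by omega) he.symm
            omega
          · rw [hgval2 m (by omega), hgval2 m' (by omega)] at he
            have := hfv.2 (k + (m - a)) (k + (m' - a)) (by omega) (by omega) he; omega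
      have hg0 : g 0 = u := by rw [hgval1 0 (by omega), Nat.sub_zero, hfuN]
      have hgab : g (a + b) = v := by
        rw [hgval2 (a + b) (by omega), show k + (a + b - a) = Nv by omega, hfvN]
      obtain ⟨hab, hgF⟩ := pathFun_unique hT hgPF hF (hg0.trans hF0.symm) (hgab.trans hFN.symm)
      have hwF : F a = fu k := by
        rw [← hgF a (by omega), hgval1 a le_rfl, show Nu - a = k by omega]
      have hk1 : 1 ≤ k := by
        by_contra h0
        push_neg at h0
        apply hsR
        have hFa : F a = s := by rw [hwF, show k = 0 by omega, hfu0]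
        rw [← hFa]
        exact hFmem a (by omega)
      have hFam1 : F (a - 1) = fu (k + 1) := by
        rw [← hgF (a - 1) (by omega), hgval1 (a - 1) (by omega),
          show Nu - (a - 1) = k + 1 by omega]
      have hFap1 : F (a + 1) = fv (k + 1) := by
        rw [← hgF (a + 1) (by omega), hgval2 (a + 1) (by omega),
          show k + (a + 1 - a) = k + 1 by omega]
      have pt3 := hFPT a (by omega) (by omega)
      rw [hwF, hFam1, hFap1] at pt3
      have pt1 := hfuPT k (by omega) hkltNu
      have pt2 := hfvPT k (by omega) hkltNv
      rw [show fv k = fu k from (hagree k le_rfl).symm,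
        show fv (k - 1) = fu (k - 1) from (hagree (k - 1) (by omega)).symm] at pt2
      simp only [← Finset.not_nonempty_iff_eq_empty] at pt1 pt2 pt3
      tauto
end

section
/- Let 𝒯 = (T, λ) be a temporal oriented tree and let G be its connectivity graph. Then G contains no induced cycle of length exactly 6. -/
namespace C6
open SimpleGraph

variable {V : Type*} {lab : V → V → Finset ℕ}

/-- Totalized vertex access of a `TPath`. -/
def pv (P : TPath lab) (i : ℕ) : V := P.verts ⟨min i P.len, by omega⟩

/-- Totalized time access of a `TPath`. -/
def pt (P : TPath lab) (i : ℕ) : ℕ := if h : i < P.len then P.times ⟨i, h⟩ else 0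

lemma pv_eq (P : TPath lab) {i : ℕ} (h : i ≤ P.len) :
    pv P i = P.verts ⟨i, by omega⟩ := by
  unfold pv; congr 1; exact Fin.ext (by simp [Nat.min_eq_left h])

lemma pv_inj (P : TPath lab) {i j : ℕ} (hi : i ≤ P.len) (hj : j ≤ P.len)
    (h : pv P i = pv P j) : i = j := by
  rw [pv_eq P hi, pv_eq P hj] at h
  have := P.inj h
  simpa using congrArg Fin.val this

lemma pt_lt (P : TPath lab) {i j : ℕ} (hij : i < j) (hj : j < P.len) :
    pt P i < pt P j := by
  unfold pt
  rw [dif_pos (lt_trans hij hj), dif_pos hj]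
  exact P.mono (by exact hij)

lemma pt_mem (P : TPath lab) {i : ℕ} (h : i < P.len) :
    pt P i ∈ lab (pv P i) (pv P (i + 1)) := by
  have h2 := P.mem_lab ⟨i, h⟩
  have e1 : P.verts (Fin.castSucc ⟨i, h⟩) = pv P i := by
    rw [pv_eq P h.le]; exact congrArg P.verts (Fin.ext (by simp))
  have e2 : P.verts (Fin.succ ⟨i, h⟩) = pv P (i + 1) := by
    rw [pv_eq P (by omega : i + 1 ≤ P.len)]; exact congrArg P.verts (Fin.ext (by simp))
  rw [e1, e2] at h2
  unfold pt; rw [dif_pos h]; exact h2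

lemma pv_ne (P : TPath lab) {i j : ℕ} (hi : i ≤ P.len) (hj : j ≤ P.len) (hij : i ≠ j) :
    pv P i ≠ pv P j := fun h => hij (pv_inj P hi hj h)

lemma adj_pv (P : TPath lab) {i : ℕ} (h : i < P.len) :
    (underlyingGraph lab).Adj (pv P i) (pv P (i + 1)) :=
  ⟨pv_ne P (le_of_lt h) (by omega) (by omega), Or.inl ⟨pt P i, pt_mem P h⟩⟩

lemma pv_mem (P : TPath lab) (i : ℕ) : pv P i ∈ P.vertexSet := ⟨_, rfl⟩

lemma fromTo_pv {P : TPath lab} {u v : V} (h : P.FromTo u v) :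
    pv P 0 = u ∧ pv P P.len = v := by
  obtain ⟨h1, h2⟩ := h
  refine ⟨?_, ?_⟩
  · rw [pv_eq P (by omega : 0 ≤ P.len), ← h1]
    exact congrArg P.verts (Fin.ext (by simp))
  · rw [pv_eq P le_rfl, ← h2]
    exact congrArg P.verts (Fin.ext (by simp))

lemma fromTo_of_pv {P : TPath lab} {u v : V} (h1 : pv P 0 = u) (h2 : pv P P.len = v) :
    P.FromTo u v := by
  refine ⟨?_, ?_⟩
  · rw [← h1, pv_eq P (by omega : 0 ≤ P.len)]
    exact congrArg P.verts (Fin.ext (by simp))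
  · rw [← h2, pv_eq P le_rfl]
    exact congrArg P.verts (Fin.ext (by simp))

/-- The one-vertex temporal path. -/
def trivPath (lab : V → V → Finset ℕ) (u : V) : TPath lab where
  len := 0
  verts := fun _ => u
  times := fun i => i.elim0
  inj := fun a b _ => Fin.ext (by omega)
  mono := fun a => a.elim0
  mem_lab := fun i => i.elim0

lemma tc_refl (u : V) : TempConnected lab u u :=
  ⟨trivPath lab u, ⟨0, rfl⟩, ⟨0, rfl⟩⟩

lemma tc_symm {u v : V} (h : TempConnected lab u v) : TempConnected lab v u :=
  h.imp fun _ hP => ⟨hP.2, hP.1⟩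

lemma tc_of_mem {P : TPath lab} {u v : V} (hu : u ∈ P.vertexSet) (hv : v ∈ P.vertexSet) :
    TempConnected lab u v := ⟨P, hu, hv⟩

lemma ne_of_not_tc {u v : V} (h : ¬ TempConnected lab u v) : u ≠ v :=
  fun he => h (he ▸ tc_refl u)

/-- Subpath of a temporal path between positions `a ≤ b`. -/
def segment (P : TPath lab) (a b : ℕ) (hab : a ≤ b) (hb : b ≤ P.len) : TPath lab where
  len := b - a
  verts := fun j => pv P (a + j.val)
  times := fun j => pt P (a + j.val)
  inj := fun x y h => by
    have hx : a + x.val ≤ P.len := by omega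
    have hy : a + y.val ≤ P.len := by omega
    have := pv_inj P hx hy h
    exact Fin.ext (by omega)
  mono := fun x y hxy => by
    refine pt_lt P (by exact Nat.add_lt_add_left hxy a) (by omega)
  mem_lab := fun j => by
    have h1 : a + j.val < P.len := by omega
    have h2 := pt_mem P h1
    show pt P (a + j.val) ∈ lab (pv P (a + (Fin.castSucc j).val)) (pv P (a + (Fin.succ j).val))
    simpa [Fin.val_succ, Nat.add_assoc] using h2

end C6
namespace C6
open SimpleGraph

variable {V : Type*} {lab : V → V → Finset ℕ}

lemma segment_fromTo (P : TPath lab) {a b : ℕ} (hab : a ≤ b) (hb : b ≤ P.len) :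
    (segment P a b hab hb).FromTo (pv P a) (pv P b) := by
  apply fromTo_of_pv
  · rw [pv_eq _ (Nat.zero_le _)]
    show pv P (a + 0) = pv P a
    congr 1
  · rw [pv_eq _ le_rfl]
    show pv P (a + (b - a)) = pv P b
    congr 1
    omega

lemma tc_exists_fromto {u v : V} (h : TempConnected lab u v) :
    ∃ P : TPath lab, P.FromTo u v ∨ P.FromTo v u := by
  obtain ⟨P, ⟨s, hs⟩, ⟨t, ht⟩⟩ := h
  rcases le_total s.val t.val with hle | hle
  · refine ⟨segment P s.val t.val hle (by omega), Or.inl ?_⟩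
    have h2 := segment_fromTo P hle (by omega : t.val ≤ P.len)
    have e1 : pv P s.val = u := by
      rw [pv_eq P (by omega), ← hs]
    have e2 : pv P t.val = v := by
      rw [pv_eq P (by omega), ← ht]
    rwa [e1, e2] at h2
  · refine ⟨segment P t.val s.val hle (by omega), Or.inr ?_⟩
    have h2 := segment_fromTo P hle (by omega : s.val ≤ P.len)
    have e1 : pv P s.val = u := by
      rw [pv_eq P (by omega), ← hs]
    have e2 : pv P t.val = v := by
      rw [pv_eq P (by omega), ← ht]
    rwa [e1, e2] at h2

/-- The underlying graph minus the edge `{p, q}`. -/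
def Gminus (lab : V → V → Finset ℕ) (p q : V) : SimpleGraph V :=
  (underlyingGraph lab).deleteEdges {s(p, q)}

/-- The side of the cut at `{p,q}` containing `p`. -/
def Xside (lab : V → V → Finset ℕ) (p q z : V) : Prop := (Gminus lab p q).Reachable z p

lemma bridge_of_lab (htree : IsTemporalOrientedTree lab) {p q : V} {t : ℕ}
    (ht : t ∈ lab p q) (hne : p ≠ q) : ¬ (Gminus lab p q).Reachable p q := by
  have hadj : (underlyingGraph lab).Adj p q := ⟨hne, Or.inl ⟨t, ht⟩⟩
  have hac : (underlyingGraph lab).IsAcyclic := ((isTree_iff _).mp htree.1).2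
  have hb := (isAcyclic_iff_forall_adj_isBridge.mp hac) hadj
  rw [isBridge_iff] at hb
  exact hb

lemma no_opp (htree : IsTemporalOrientedTree lab) {p q : V} {t s : ℕ}
    (ht : t ∈ lab p q) (hs : s ∈ lab q p) : False := by
  have := htree.2 p q ⟨t, ht⟩
  rw [this] at hs
  exact absurd hs (Finset.notMem_empty _)

lemma reach_seg (P : TPath lab) (e : Sym2 V) :
    ∀ b a : ℕ, a ≤ b → b ≤ P.len → (∀ i, a ≤ i → i < b → s(pv P i, pv P (i+1)) ≠ e) →
    ((underlyingGraph lab).deleteEdges {e}).Reachable (pv P a) (pv P b) := by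
  intro b
  induction b with
  | zero =>
    intro a h1 _ _
    have : a = 0 := by omega
    subst this
    exact Reachable.refl _
  | succ n ih =>
    intro a h1 h2 h3
    rcases Nat.eq_or_lt_of_le h1 with rfl | hlt
    · exact Reachable.refl _
    · have ha : a ≤ n := by omega
      refine (ih a ha (by omega) (fun i hi1 hi2 => h3 i hi1 (by omega))).trans ?_
      refine Adj.reachable ?_
      rw [deleteEdges_adj]
      exact ⟨adj_pv P (by omega), by simpa using h3 n ha (by omega)⟩

lemma exists_switch {g : ℕ → Prop} {a b : ℕ} (hab : a ≤ b) (ha : g a) (hb : ¬ g b) :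
    ∃ j, a ≤ j ∧ j < b ∧ g j ∧ ¬ g (j + 1) := by
  by_contra hc
  push_neg at hc
  have key : ∀ d : ℕ, a + d ≤ b → g (a + d) := by
    intro d
    induction d with
    | zero => intro _; rw [Nat.add_zero]; exact ha
    | succ n ih =>
      intro hle
      have h1 := ih (by omega)
      have h2 := hc (a + n) (by omega) (by omega) h1
      rw [Nat.add_succ]; exact h2
  have := key (b - a) (by omega)
  rw [show a + (b - a) = b by omega] at this
  exact hb this

lemma m1_cross (P : TPath lab) {p q : V}
    {a b : ℕ} (hab : a ≤ b) (hb : b ≤ P.len)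
    (hXa : Xside lab p q (pv P a)) (hXb : ¬ Xside lab p q (pv P b))
    (hbr : ¬ (Gminus lab p q).Reachable p q) :
    ∃ j, a ≤ j ∧ j < b ∧ pv P j = p ∧ pv P (j+1) = q := by
  obtain ⟨j, hj1, hj2, hg, hng⟩ :=
    exists_switch (g := fun i => Xside lab p q (pv P i)) hab hXa hXb
  have hadj := adj_pv P (by omega : j < P.len)
  by_cases hedge : s(pv P j, pv P (j+1)) = s(p, q)
  · rw [Sym2.eq_iff] at hedge
    rcases hedge with ⟨h1, h2⟩ | ⟨h1, h2⟩
    · exact ⟨j, hj1, hj2, h1, h2⟩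
    · exact absurd (h1 ▸ hg : (Gminus lab p q).Reachable q p).symm hbr
  · have hadj2 : (Gminus lab p q).Adj (pv P j) (pv P (j+1)) := by
      rw [Gminus, deleteEdges_adj]
      exact ⟨hadj, by simpa using hedge⟩
    exact (hng (hadj2.symm.reachable.trans hg)).elim

lemma m1_back (htree : IsTemporalOrientedTree lab) (P : TPath lab) {p q : V} {t : ℕ}
    (ht : t ∈ lab p q)
    {a b : ℕ} (hab : a ≤ b) (hb : b ≤ P.len)
    (hXa : ¬ Xside lab p q (pv P a)) (hXb : Xside lab p q (pv P b))
    (hbr : ¬ (Gminus lab p q).Reachable p q) : False := by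
  obtain ⟨j, hj1, hj2, hg, hng⟩ :=
    exists_switch (g := fun i => ¬ Xside lab p q (pv P i)) hab hXa (not_not.mpr hXb)
  rw [not_not] at hng
  have hadj := adj_pv P (by omega : j < P.len)
  by_cases hedge : s(pv P j, pv P (j+1)) = s(p, q)
  · rw [Sym2.eq_iff] at hedge
    rcases hedge with ⟨h1, h2⟩ | ⟨h1, h2⟩
    · exact hbr (h2 ▸ hng : (Gminus lab p q).Reachable q p).symm
    · exact no_opp htree ht (by rw [← h1, ← h2]; exact pt_mem P (by omega : j < P.len))
  · have hadj2 : (Gminus lab p q).Adj (pv P j) (pv P (j+1)) := by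
      rw [Gminus, deleteEdges_adj]
      exact ⟨hadj, by simpa using hedge⟩
    exact hg (hadj2.reachable.trans hng)

lemma m1_conv (P : TPath lab) {p q : V} {j : ℕ} (hj : j < P.len)
    (hp : pv P j = p) (hq : pv P (j+1) = q)
    (hbr : ¬ (Gminus lab p q).Reachable p q) :
    (∀ a, a ≤ j → Xside lab p q (pv P a)) ∧
    (∀ b, j+1 ≤ b → b ≤ P.len → ¬ Xside lab p q (pv P b)) := by
  constructor
  · intro a haj
    have hreach := reach_seg P s(p,q) j a haj (by omega) ?_
    · exact (hp ▸ hreach : (Gminus lab p q).Reachable (pv P a) p)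
    · intro i hi1 hi2 hedge
      rw [Sym2.eq_iff] at hedge
      rcases hedge with ⟨h1, h2⟩ | ⟨h1, h2⟩
      · have := pv_inj P (by omega) (by omega) (h2.trans hq.symm)
        omega
      · have := pv_inj P (by omega) (by omega) (h1.trans hq.symm)
        omega
  · intro b hb1 hb2 hX
    have hreach := reach_seg P s(p,q) b (j+1) hb1 hb2 ?_
    · have : (Gminus lab p q).Reachable q (pv P b) := hq ▸ hreach
      exact hbr (this.trans hX).symm
    · intro i hi1 hi2 hedge
      rw [Sym2.eq_iff] at hedge
      rcases hedge with ⟨h1, h2⟩ | ⟨h1, h2⟩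
      · have := pv_inj P (by omega) (by omega) (h1.trans hp.symm)
        omega
      · have := pv_inj P (by omega) (by omega) (h2.trans hp.symm)
        omega

end C6
namespace C6
open SimpleGraph

variable {V : Type*} {lab : V → V → Finset ℕ}

lemma strictMono_fin {n : ℕ} {f : Fin n → ℕ}
    (h : ∀ i : ℕ, ∀ hi : i + 1 < n, f ⟨i, by omega⟩ < f ⟨i+1, hi⟩) : StrictMono f := by
  have key : ∀ d a, ∀ ha : a < n, ∀ hd : a + d + 1 < n, f ⟨a, ha⟩ < f ⟨a + d + 1, hd⟩ := by
    intro d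
    induction d with
    | zero =>
      intro a ha hd
      exact h a hd
    | succ k ih =>
      intro a ha hd
      exact (ih a ha (by omega)).trans (h (a + k + 1) hd)
  intro a b hab
  have hlt : a.val < b.val := hab
  have hd : a.val + (b.val - a.val - 1) + 1 < n := by omega
  have hkey := key (b.val - a.val - 1) a.val a.isLt hd
  have hbeq : b = ⟨a.val + (b.val - a.val - 1) + 1, hd⟩ := Fin.ext (by
    show b.val = a.val + (b.val - a.val - 1) + 1
    omega)
  rw [hbeq]
  exact hkey

lemma combine (htree : IsTemporalOrientedTree lab)
    (P Q : TPath lab) {m r : ℕ} (hm1 : 1 ≤ m) (hm : m ≤ P.len) (hr : r < Q.len)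
    (hv : pv P m = pv Q r) (ht : pt P (m-1) < pt Q r) :
    ∃ R : TPath lab, (∀ j, j ≤ m → pv P j ∈ R.vertexSet) ∧
      (∀ j, r ≤ j → j ≤ Q.len → pv Q j ∈ R.vertexSet) := by
  have hlabwh : pt P (m-1) ∈ lab (pv P (m-1)) (pv P m) := by
    have := pt_mem P (by omega : m - 1 < P.len)
    rwa [show m - 1 + 1 = m by omega] at this
  have hne : pv P (m-1) ≠ pv P m := pv_ne P (by omega) (by omega) (by omega)
  have hbr : ¬ (Gminus lab (pv P (m-1)) (pv P m)).Reachable (pv P (m-1)) (pv P m) :=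
    bridge_of_lab htree hlabwh hne
  have c1 : ∀ x, x ≤ m - 1 →
      (Gminus lab (pv P (m-1)) (pv P m)).Reachable (pv P x) (pv P (m-1)) := by
    intro x hx
    refine reach_seg P s(pv P (m-1), pv P m) (m-1) x hx (by omega) ?_
    intro i hi1 hi2 hedge
    rw [Sym2.eq_iff] at hedge
    rcases hedge with ⟨h1, h2⟩ | ⟨h1, h2⟩
    · have := pv_inj P (by omega) (by omega) h2; omega
    · have := pv_inj P (by omega) (by omega) h1; omega
  have c2 : ∀ y, r ≤ y → y ≤ Q.len →
      (Gminus lab (pv P (m-1)) (pv P m)).Reachable (pv Q y) (pv P m) := by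
    intro y hy1 hy2
    have hreach := reach_seg Q s(pv P (m-1), pv P m) y r hy1 hy2 ?_
    · rw [← hv] at hreach
      exact hreach.symm
    · intro i hi1 hi2 hedge
      rw [Sym2.eq_iff] at hedge
      rcases hedge with ⟨h1, h2⟩ | ⟨h1, h2⟩
      · have : i + 1 = r := pv_inj Q (by omega) (by omega) (h2.trans hv)
        omega
      · exfalso
        have := pt_mem Q (by omega : i < Q.len)
        rw [h1, h2] at this
        exact no_opp htree hlabwh this
  have key : ∀ x y, x ≤ m → r ≤ y → y ≤ Q.len → pv P x = pv Q y → x = m ∧ y = r := by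
    intro x y hx hy1 hy2 hxy
    rcases Nat.eq_or_lt_of_le hx with heq | hlt
    · rw [heq] at hxy
      exact ⟨heq, pv_inj Q hy2 (by omega) (hxy.symm.trans hv)⟩
    · exfalso
      have r1 := c1 x (by omega)
      have r2 := c2 y hy1 hy2
      rw [hxy] at r1
      exact hbr (r1.symm.trans r2)
  refine ⟨⟨m + (Q.len - r),
    fun j => if j.val ≤ m then pv P j.val else pv Q (r + j.val - m),
    fun j => if j.val < m then pt P j.val else pt Q (r + j.val - m),
    ?_, ?_, ?_⟩, ?_, ?_⟩
  · intro x y hxy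
    dsimp only at hxy
    split_ifs at hxy with h1 h2 h2
    · exact Fin.ext (pv_inj P (by omega) (by omega) hxy)
    · obtain ⟨e1, e2⟩ := key x.val (r + y.val - m) h1 (by omega) (by omega) hxy
      exact Fin.ext (by omega)
    · obtain ⟨e1, e2⟩ := key y.val (r + x.val - m) h2 (by omega) (by omega) hxy.symm
      exact Fin.ext (by omega)
    · have := pv_inj Q (by omega) (by omega) hxy
      exact Fin.ext (by omega)
  · refine strictMono_fin (fun i hi => ?_)
    show (if i < m then pt P i else pt Q (r + i - m)) <
      (if i + 1 < m then pt P (i+1) else pt Q (r + (i+1) - m))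
    by_cases hc1 : i + 1 < m
    · rw [if_pos hc1, if_pos (by omega : i < m)]
      exact pt_lt P (by omega) (by omega)
    · by_cases hc2 : i < m
      · rw [if_pos hc2, if_neg hc1]
        rw [show i = m - 1 by omega, show r + (m - 1 + 1) - m = r by omega]
        exact ht
      · rw [if_neg hc1, if_neg hc2]
        rw [show r + (i + 1) - m = (r + i - m) + 1 by omega]
        exact pt_lt Q (by omega) (by omega)
  · intro i
    show (if i.val < m then pt P i.val else pt Q (r + i.val - m)) ∈ lab
      (if i.val ≤ m then pv P i.val else pv Q (r + i.val - m))
      (if i.val + 1 ≤ m then pv P (i.val + 1) else pv Q (r + (i.val + 1) - m))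
    by_cases hc : i.val < m
    · rw [if_pos hc, if_pos (by omega : i.val ≤ m), if_pos (by omega : i.val + 1 ≤ m)]
      exact pt_mem P (by omega)
    · by_cases hc2 : i.val = m
      · rw [if_neg hc, if_pos (by omega : i.val ≤ m), if_neg (by omega : ¬ i.val + 1 ≤ m)]
        rw [hc2, show r + m - m = r by omega, show r + (m + 1) - m = r + 1 by omega, hv]
        exact pt_mem Q (by omega)
      · rw [if_neg hc, if_neg (by omega : ¬ i.val ≤ m), if_neg (by omega : ¬ i.val + 1 ≤ m)]
        rw [show r + (i.val + 1) - m = (r + i.val - m) + 1 by omega]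
        exact pt_mem Q (by omega)
  · intro j hj
    refine ⟨⟨j, show j < m + (Q.len - r) + 1 by omega⟩, ?_⟩
    show (if j ≤ m then pv P j else pv Q (r + j - m)) = pv P j
    rw [if_pos hj]
  · intro j hj1 hj2
    by_cases hjr : j = r
    · refine ⟨⟨m, show m < m + (Q.len - r) + 1 by omega⟩, ?_⟩
      show (if m ≤ m then pv P m else pv Q (r + m - m)) = pv Q j
      rw [if_pos (le_refl m), hjr, ← hv]
    · refine ⟨⟨m + (j - r), show m + (j - r) < m + (Q.len - r) + 1 by omega⟩, ?_⟩
      show (if m + (j - r) ≤ m then pv P (m + (j - r)) else pv Q (r + (m + (j - r)) - m)) = pv Q j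
      rw [if_neg (by omega : ¬ m + (j - r) ≤ m), show r + (m + (j - r)) - m = j by omega]

end C6
namespace C6
open SimpleGraph

variable {V : Type*} {lab : V → V → Finset ℕ}

/-- `Q` traverses the arc `p → q`. -/
def HasArc (Q : TPath lab) (p q : V) : Prop :=
  ∃ j, j < Q.len ∧ pv Q j = p ∧ pv Q (j+1) = q

lemma HasArc.mem_fst {Q : TPath lab} {p q : V} (h : HasArc Q p q) : p ∈ Q.vertexSet := by
  obtain ⟨j, _, h1, _⟩ := h
  exact h1 ▸ pv_mem Q j

lemma HasArc.mem_snd {Q : TPath lab} {p q : V} (h : HasArc Q p q) : q ∈ Q.vertexSet := by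
  obtain ⟨j, _, _, h2⟩ := h
  exact h2 ▸ pv_mem Q (j+1)

/-- Two temporal paths sharing an arc connect crosswise. -/
lemma share_arc (htree : IsTemporalOrientedTree lab) {P Q : TPath lab} {u v x y p q : V}
    (hP : P.FromTo u v) (hQ : Q.FromTo x y)
    (hPa : HasArc P p q) (hQa : HasArc Q p q) :
    TempConnected lab u y ∨ TempConnected lab x v := by
  obtain ⟨k, hk, hk1, hk2⟩ := hPa
  obtain ⟨l, hl, hl1, hl2⟩ := hQa
  obtain ⟨hu, hv2⟩ := fromTo_pv hP
  obtain ⟨hx, hy⟩ := fromTo_pv hQ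
  rcases le_or_gt (pt P k) (pt Q l) with hle | hlt
  · left
    rcases Nat.eq_or_lt_of_le (show l + 1 ≤ Q.len from hl) with heq | hlt2
    · have : y = pv P (k+1) := by rw [← hy, ← heq, hl2, ← hk2]
      exact tc_of_mem (hu ▸ pv_mem P 0) (this ▸ pv_mem P (k+1))
    · obtain ⟨R, hR1, hR2⟩ := combine htree P Q (m := k+1) (r := l+1) (by omega) (by omega)
        hlt2 (by rw [hk2, ← hl2])
        (by rw [show k+1-1 = k by omega]; exact lt_of_le_of_lt hle (pt_lt Q (by omega) hlt2))
      exact tc_of_mem (hu ▸ hR1 0 (by omega)) (hy ▸ hR2 Q.len (by omega) le_rfl)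
  · right
    rcases Nat.eq_or_lt_of_le (show k + 1 ≤ P.len from hk) with heq | hlt2
    · have : v = pv Q (l+1) := by rw [← hv2, ← heq, hk2, ← hl2]
      exact tc_of_mem (hx ▸ pv_mem Q 0) (this ▸ pv_mem Q (l+1))
    · obtain ⟨R, hR1, hR2⟩ := combine htree Q P (m := l+1) (r := k+1) (by omega) (by omega)
        hlt2 (by rw [hl2, ← hk2])
        (by rw [show l+1-1 = l by omega]; exact lt_of_lt_of_le hlt (le_of_lt (pt_lt P (by omega) hlt2)))
      exact tc_of_mem (hx ▸ hR1 0 (by omega)) (hv2 ▸ hR2 P.len (by omega) le_rfl)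

/-- Case A: two consecutive aligned arrows around the hexagon are impossible. -/
lemma caseA (htree : IsTemporalOrientedTree lab)
    {v0 v1 v2 v3 v4 v5 : V}
    {P0 P1 : TPath lab} (hP0 : P0.FromTo v0 v1) (hP1 : P1.FromTo v1 v2)
    {Q2 Q3 Q4 Q5 : TPath lab}
    (hQ2 : Q2.FromTo v2 v3 ∨ Q2.FromTo v3 v2)
    (hQ3 : Q3.FromTo v3 v4 ∨ Q3.FromTo v4 v3)
    (hQ4 : Q4.FromTo v4 v5 ∨ Q4.FromTo v5 v4)
    (hQ5 : Q5.FromTo v5 v0 ∨ Q5.FromTo v0 v5)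
    (hne01 : v0 ≠ v1)
    (h02 : ¬ TempConnected lab v0 v2) (h13 : ¬ TempConnected lab v1 v3)
    (h03 : ¬ TempConnected lab v0 v3) (h14 : ¬ TempConnected lab v1 v4)
    (h04 : ¬ TempConnected lab v0 v4) (h15 : ¬ TempConnected lab v1 v5) : False := by
  obtain ⟨e0, e1⟩ := fromTo_pv hP0
  have hlen : 1 ≤ P0.len := by
    by_contra hc
    apply hne01
    rw [← e0, ← e1]
    congr 1
    omega
  set p := pv P0 (P0.len - 1) with hp
  have harc0 : HasArc P0 p v1 :=
    ⟨P0.len - 1, by omega, rfl, by rw [show P0.len - 1 + 1 = P0.len by omega]; exact e1⟩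
  have ht0 : pt P0 (P0.len - 1) ∈ lab p v1 := by
    have := pt_mem P0 (show P0.len - 1 < P0.len by omega)
    rwa [show P0.len - 1 + 1 = P0.len by omega, e1] at this
  have hnepq : p ≠ v1 := by
    rw [hp, ← e1]
    exact pv_ne P0 (by omega) le_rfl (by omega)
  have hbr := bridge_of_lab htree ht0 hnepq
  have hconv := m1_conv P0 (show P0.len - 1 < P0.len by omega) rfl
    (by rw [show P0.len - 1 + 1 = P0.len by omega]; exact e1) hbr
  have hX0 : Xside lab p v1 v0 := by
    have := hconv.1 0 (by omega)
    rwa [e0] at this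
  have hnX1 : ¬ Xside lab p v1 v1 := by
    have := hconv.2 P0.len (by omega) le_rfl
    rwa [e1] at this
  -- propagation helpers
  have back : ∀ (R : TPath lab) (s t : V), R.FromTo s t →
      ¬ Xside lab p v1 s → Xside lab p v1 t → False := by
    intro R s t hR hs ht
    obtain ⟨f0, f1⟩ := fromTo_pv hR
    exact m1_back htree R ht0 (Nat.zero_le R.len) le_rfl (f0 ▸ hs) (f1 ▸ ht) hbr
  have cross : ∀ (R : TPath lab) (s t : V), R.FromTo s t →
      Xside lab p v1 s → ¬ Xside lab p v1 t → HasArc R p v1 := by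
    intro R s t hR hs ht
    obtain ⟨f0, f1⟩ := fromTo_pv hR
    obtain ⟨j, _, hj2, hj3, hj4⟩ :=
      m1_cross R (Nat.zero_le R.len) le_rfl (f0 ▸ hs) (f1 ▸ ht) hbr
    exact ⟨j, hj2, hj3, hj4⟩
  have hnX2 : ¬ Xside lab p v1 v2 := fun hX2 => back P1 v1 v2 hP1 hnX1 hX2
  have hnX3 : ¬ Xside lab p v1 v3 := by
    intro hX3
    rcases hQ2 with hf | hb
    · exact back Q2 v2 v3 hf hnX2 hX3
    · rcases share_arc htree hP0 hb harc0 (cross Q2 v3 v2 hb hX3 hnX2) with h | h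
      · exact h02 h
      · exact h13 (tc_symm h)
  have hnX4 : ¬ Xside lab p v1 v4 := by
    intro hX4
    rcases hQ3 with hf | hb
    · exact back Q3 v3 v4 hf hnX3 hX4
    · rcases share_arc htree hP0 hb harc0 (cross Q3 v4 v3 hb hX4 hnX3) with h | h
      · exact h03 h
      · exact h14 (tc_symm h)
  have hnX5 : ¬ Xside lab p v1 v5 := by
    intro hX5
    rcases hQ4 with hf | hb
    · exact back Q4 v4 v5 hf hnX4 hX5
    · rcases share_arc htree hP0 hb harc0 (cross Q4 v5 v4 hb hX5 hnX4) with h | h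
      · exact h04 h
      · exact h15 (tc_symm h)
  rcases hQ5 with hf | hb
  · exact back Q5 v5 v0 hf hnX5 hX0
  · have harc5 := cross Q5 v0 v5 hb hX0 hnX5
    obtain ⟨f0, f1⟩ := fromTo_pv hb
    exact h15 (tc_of_mem harc5.mem_snd (f1 ▸ pv_mem Q5 Q5.len))

end C6
namespace C6
open SimpleGraph

variable {V : Type*} {lab : V → V → Finset ℕ}

/-- Configuration of an induced 6-cycle whose arrows alternate (sources `a0, a2, a4`). -/
structure AltCfg (lab : V → V → Finset ℕ) where
  a0 : V
  a1 : V
  a2 : V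
  a3 : V
  a4 : V
  a5 : V
  P0 : TPath lab
  P1 : TPath lab
  P2 : TPath lab
  P3 : TPath lab
  P4 : TPath lab
  P5 : TPath lab
  f0 : P0.FromTo a0 a1
  f1 : P1.FromTo a2 a1
  f2 : P2.FromTo a2 a3
  f3 : P3.FromTo a4 a3
  f4 : P4.FromTo a4 a5
  f5 : P5.FromTo a0 a5
  d01 : a0 ≠ a1
  d12 : a1 ≠ a2
  d23 : a2 ≠ a3
  d34 : a3 ≠ a4
  d45 : a4 ≠ a5
  d50 : a5 ≠ a0
  n02 : ¬ TempConnected lab a0 a2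
  n03 : ¬ TempConnected lab a0 a3
  n04 : ¬ TempConnected lab a0 a4
  n13 : ¬ TempConnected lab a1 a3
  n14 : ¬ TempConnected lab a1 a4
  n15 : ¬ TempConnected lab a1 a5
  n24 : ¬ TempConnected lab a2 a4
  n25 : ¬ TempConnected lab a2 a5
  n35 : ¬ TempConnected lab a3 a5

/-- Rotate the configuration by two positions. -/
def AltCfg.rot2 (C : AltCfg lab) : AltCfg lab where
  a0 := C.a2
  a1 := C.a3
  a2 := C.a4
  a3 := C.a5
  a4 := C.a0
  a5 := C.a1
  P0 := C.P2
  P1 := C.P3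
  P2 := C.P4
  P3 := C.P5
  P4 := C.P0
  P5 := C.P1
  f0 := C.f2
  f1 := C.f3
  f2 := C.f4
  f3 := C.f5
  f4 := C.f0
  f5 := C.f1
  d01 := C.d23
  d12 := C.d34
  d23 := C.d45
  d34 := C.d50
  d45 := C.d01
  d50 := C.d12
  n02 := C.n24
  n03 := C.n25
  n04 := fun h => C.n02 (tc_symm h)
  n13 := C.n35
  n14 := fun h => C.n03 (tc_symm h)
  n15 := fun h => C.n13 (tc_symm h)
  n24 := fun h => C.n04 (tc_symm h)
  n25 := fun h => C.n14 (tc_symm h)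
  n35 := fun h => C.n15 (tc_symm h)

/-- Reflect the configuration (fixing the source `a2`). -/
def AltCfg.reflect (C : AltCfg lab) : AltCfg lab where
  a0 := C.a2
  a1 := C.a1
  a2 := C.a0
  a3 := C.a5
  a4 := C.a4
  a5 := C.a3
  P0 := C.P1
  P1 := C.P0
  P2 := C.P5
  P3 := C.P4
  P4 := C.P3
  P5 := C.P2
  f0 := C.f1
  f1 := C.f0
  f2 := C.f5
  f3 := C.f4
  f4 := C.f3
  f5 := C.f2
  d01 := fun h => C.d12 h.symm
  d12 := fun h => C.d01 h.symm
  d23 := fun h => C.d50 h.symm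
  d34 := fun h => C.d45 h.symm
  d45 := fun h => C.d34 h.symm
  d50 := fun h => C.d23 h.symm
  n02 := fun h => C.n02 (tc_symm h)
  n03 := C.n25
  n04 := C.n24
  n13 := C.n15
  n14 := C.n14
  n15 := C.n13
  n24 := C.n04
  n25 := C.n03
  n35 := fun h => C.n35 (tc_symm h)

lemma back' (htree : IsTemporalOrientedTree lab) {p q : V} {t0 : ℕ} (ht : t0 ∈ lab p q)
    (hbr : ¬ (Gminus lab p q).Reachable p q) {R : TPath lab} {s u : V}
    (hR : R.FromTo s u) (hs : ¬ Xside lab p q s) (hu : Xside lab p q u) : False := by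
  obtain ⟨g0, g1⟩ := fromTo_pv hR
  exact m1_back htree R ht (Nat.zero_le R.len) le_rfl (g0 ▸ hs) (g1 ▸ hu) hbr

lemma cross' {p q : V}
    (hbr : ¬ (Gminus lab p q).Reachable p q) {R : TPath lab} {s u : V}
    (hR : R.FromTo s u) (hs : Xside lab p q s) (hu : ¬ Xside lab p q u) : HasArc R p q := by
  obtain ⟨g0, g1⟩ := fromTo_pv hR
  obtain ⟨j, _, hj2, hj3, hj4⟩ :=
    m1_cross R (Nat.zero_le R.len) le_rfl (g0 ▸ hs) (g1 ▸ hu) hbr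
  exact ⟨j, hj2, hj3, hj4⟩

/-- Every arc of `P0` is shared with `P1` or with `P5`. -/
lemma cover0 (htree : IsTemporalOrientedTree lab) (C : AltCfg lab) {j : ℕ} (hj : j < C.P0.len) :
    HasArc C.P1 (pv C.P0 j) (pv C.P0 (j+1)) ∨ HasArc C.P5 (pv C.P0 j) (pv C.P0 (j+1)) := by
  obtain ⟨e0, e1⟩ := fromTo_pv C.f0
  have ht := pt_mem C.P0 hj
  have hne : pv C.P0 j ≠ pv C.P0 (j+1) := pv_ne C.P0 (by omega) (by omega) (by omega)
  have hbr := bridge_of_lab htree ht hne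
  have hconv := m1_conv C.P0 hj rfl rfl hbr
  have hX0 : Xside lab (pv C.P0 j) (pv C.P0 (j+1)) C.a0 := by
    have := hconv.1 0 (by omega); rwa [e0] at this
  have hnX1 : ¬ Xside lab (pv C.P0 j) (pv C.P0 (j+1)) C.a1 := by
    have := hconv.2 C.P0.len (by omega) le_rfl; rwa [e1] at this
  have harc : HasArc C.P0 (pv C.P0 j) (pv C.P0 (j+1)) := ⟨j, hj, rfl, rfl⟩
  by_cases hX2 : Xside lab (pv C.P0 j) (pv C.P0 (j+1)) C.a2
  · exact Or.inl (cross' hbr C.f1 hX2 hnX1)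
  · have hnX3 : ¬ Xside lab (pv C.P0 j) (pv C.P0 (j+1)) C.a3 :=
      fun hX3 => back' htree ht hbr C.f2 hX2 hX3
    have hnX4 : ¬ Xside lab (pv C.P0 j) (pv C.P0 (j+1)) C.a4 := by
      intro hX4
      rcases share_arc htree C.f0 C.f3 harc (cross' hbr C.f3 hX4 hnX3) with h | h
      · exact C.n03 h
      · exact C.n14 (tc_symm h)
    have hnX5 : ¬ Xside lab (pv C.P0 j) (pv C.P0 (j+1)) C.a5 :=
      fun hX5 => back' htree ht hbr C.f4 hnX4 hX5
    exact Or.inr (cross' hbr C.f5 hX0 hnX5)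

/-- No arc is shared by all of `P5`, `P0`, `P1`. -/
lemma disj0 (htree : IsTemporalOrientedTree lab) (C : AltCfg lab) {p q : V}
    (h0 : HasArc C.P0 p q) (h1 : HasArc C.P1 p q) (h5 : HasArc C.P5 p q) : False := by
  obtain ⟨j, hj, hjp, hjq⟩ := h0
  have ht : pt C.P0 j ∈ lab p q := by rw [← hjp, ← hjq]; exact pt_mem C.P0 hj
  have hne : p ≠ q := by rw [← hjp, ← hjq]; exact pv_ne C.P0 (by omega) (by omega) (by omega)
  have hbr := bridge_of_lab htree ht hne
  obtain ⟨e0, e1⟩ := fromTo_pv C.f0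
  obtain ⟨e2, _⟩ := fromTo_pv C.f1
  obtain ⟨_, e5⟩ := fromTo_pv C.f5
  have hconv0 := m1_conv C.P0 hj hjp hjq hbr
  have hX0 : Xside lab p q C.a0 := by
    have := hconv0.1 0 (by omega); rwa [e0] at this
  have hnX1 : ¬ Xside lab p q C.a1 := by
    have := hconv0.2 C.P0.len (by omega) le_rfl; rwa [e1] at this
  obtain ⟨l1, hl1, hl1p, hl1q⟩ := h1
  have hconv1 := m1_conv C.P1 hl1 hl1p hl1q hbr
  have hX2 : Xside lab p q C.a2 := by
    have := hconv1.1 0 (by omega); rwa [e2] at this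
  obtain ⟨l5, hl5, hl5p, hl5q⟩ := h5
  have hconv5 := m1_conv C.P5 hl5 hl5p hl5q hbr
  have hnX5 : ¬ Xside lab p q C.a5 := by
    have := hconv5.2 C.P5.len (by omega) le_rfl; rwa [e5] at this
  have hnX4 : ¬ Xside lab p q C.a4 := by
    intro hX4
    rcases share_arc htree C.f1 C.f4 ⟨l1, hl1, hl1p, hl1q⟩ (cross' hbr C.f4 hX4 hnX5) with h | h
    · exact C.n25 h
    · exact C.n14 (tc_symm h)
  have hnX3 : ¬ Xside lab p q C.a3 := fun hX3 => back' htree ht hbr C.f3 hnX4 hX3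
  rcases share_arc htree C.f2 C.f5 (cross' hbr C.f2 hX2 hnX3) ⟨l5, hl5, hl5p, hl5q⟩ with h | h
  · exact C.n25 h
  · exact C.n03 h

/-- Moving the cut one arc forward along a directed path keeps a vertex on the near side. -/
lemma xside_step (htree : IsTemporalOrientedTree lab) {w z z' : V} {t s : ℕ}
    (htz : t ∈ lab w z) (hsz : s ∈ lab z z') (hwz : w ≠ z) (hzz' : z ≠ z') (hwz' : w ≠ z')
    {a : V} (ha : Xside lab w z a) : Xside lab z z' a := by
  classical
  obtain ⟨W⟩ := ha
  obtain ⟨p, hpath⟩ := W.toPath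
  by_cases hz : z ∈ p.support
  · exact ((bridge_of_lab htree htz hwz) (Reachable.symm ⟨p.dropUntil z hz⟩)).elim
  · have hcond : ∀ e ∈ p.edges, e ∈ (Gminus lab z z').edgeSet := by
      intro e he
      have h1 : e ∈ (Gminus lab w z).edgeSet := p.edges_subset_edgeSet he
      rw [Gminus, edgeSet_deleteEdges] at h1
      rw [Gminus, edgeSet_deleteEdges]
      refine ⟨h1.1, ?_⟩
      intro hee
      rw [Set.mem_singleton_iff] at hee
      subst hee
      exact hz (Walk.fst_mem_support_of_mem_edges p he)
    refine Reachable.trans ⟨p.transfer (Gminus lab z z') hcond⟩ (Adj.reachable ?_)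
    rw [Gminus, deleteEdges_adj]
    refine ⟨⟨hwz, Or.inl ⟨t, htz⟩⟩, ?_⟩
    rw [Set.mem_singleton_iff, Sym2.eq_iff]
    rintro (⟨h1, h2⟩ | ⟨h1, h2⟩)
    · exact hwz h1
    · exact hwz' h1

/-- An arc of `P0` shared with `P1` cannot be immediately followed by one shared with `P5`. -/
lemma mono0 (htree : IsTemporalOrientedTree lab) (C : AltCfg lab) {j : ℕ}
    (hj : j + 1 < C.P0.len)
    (h1 : HasArc C.P1 (pv C.P0 j) (pv C.P0 (j+1)))
    (h5 : HasArc C.P5 (pv C.P0 (j+1)) (pv C.P0 (j+1+1))) : False := by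
  obtain ⟨e0, e1⟩ := fromTo_pv C.f0
  obtain ⟨_, e5⟩ := fromTo_pv C.f5
  have hte := pt_mem C.P0 (show j < C.P0.len by omega)
  have htf := pt_mem C.P0 hj
  have hnee : pv C.P0 j ≠ pv C.P0 (j+1) := pv_ne C.P0 (by omega) (by omega) (by omega)
  have hnef : pv C.P0 (j+1) ≠ pv C.P0 (j+1+1) := pv_ne C.P0 (by omega) (by omega) (by omega)
  have hneg : pv C.P0 j ≠ pv C.P0 (j+1+1) := pv_ne C.P0 (by omega) (by omega) (by omega)
  have hbre := bridge_of_lab htree hte hnee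
  have hX5e : Xside lab (pv C.P0 j) (pv C.P0 (j+1)) C.a5 := by
    by_contra hnX5
    have hconv := m1_conv C.P0 (show j < C.P0.len by omega) rfl rfl hbre
    have hX0 : Xside lab (pv C.P0 j) (pv C.P0 (j+1)) C.a0 := by
      have := hconv.1 0 (by omega); rwa [e0] at this
    exact disj0 htree C ⟨j, by omega, rfl, rfl⟩ h1 (cross' hbre C.f5 hX0 hnX5)
  have hstep := xside_step htree hte htf hnee hnef hneg hX5e
  obtain ⟨l5, hl5, hl5p, hl5q⟩ := h5
  have hbrf := bridge_of_lab htree htf hnef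
  have hconv5 := m1_conv C.P5 hl5 hl5p hl5q hbrf
  have hnX5f : ¬ Xside lab (pv C.P0 (j+1)) (pv C.P0 (j+1+1)) C.a5 := by
    have := hconv5.2 C.P5.len (by omega) le_rfl; rwa [e5] at this
  exact hnX5f hstep

/-- `A` splits at `k`: its first `k` arcs are shared with `Z`, the rest with `B`. -/
def SplitAt (A B Z : TPath lab) (k : ℕ) : Prop :=
  1 ≤ k ∧ k < A.len ∧
  (∀ j, j < k → HasArc Z (pv A j) (pv A (j+1))) ∧
  (∀ j, k ≤ j → j < A.len → HasArc B (pv A j) (pv A (j+1)))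

lemma split0 (htree : IsTemporalOrientedTree lab) (C : AltCfg lab) :
    ∃ k, SplitAt C.P0 C.P1 C.P5 k := by
  classical
  obtain ⟨e0, e1⟩ := fromTo_pv C.f0
  obtain ⟨e2, _⟩ := fromTo_pv C.f1
  obtain ⟨_, e5⟩ := fromTo_pv C.f5
  have hlen : 1 ≤ C.P0.len := by
    by_contra hc
    apply C.d01
    rw [← e0, ← e1]
    congr 1
    omega
  have hlast : HasArc C.P1 (pv C.P0 (C.P0.len - 1)) (pv C.P0 (C.P0.len - 1 + 1)) := by
    rcases cover0 htree C (show C.P0.len - 1 < C.P0.len by omega) with h | h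
    · exact h
    · exfalso
      have hmem := h.mem_snd
      rw [show C.P0.len - 1 + 1 = C.P0.len by omega, e1] at hmem
      exact C.n15 (tc_of_mem hmem (e5 ▸ pv_mem C.P5 C.P5.len))
  have hEx : ∃ k, k < C.P0.len ∧ HasArc C.P1 (pv C.P0 k) (pv C.P0 (k+1)) :=
    ⟨C.P0.len - 1, by omega, hlast⟩
  obtain ⟨hk1, hk2⟩ := Nat.find_spec hEx
  have hk0 : 1 ≤ Nat.find hEx := by
    rcases Nat.eq_zero_or_pos (Nat.find hEx) with h0 | h
    · exfalso
      rw [h0] at hk2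
      have hmem := hk2.mem_fst
      rw [e0] at hmem
      exact C.n02 (tc_of_mem hmem (e2 ▸ pv_mem C.P1 0))
    · exact h
  have suf : ∀ d, Nat.find hEx + d < C.P0.len →
      HasArc C.P1 (pv C.P0 (Nat.find hEx + d)) (pv C.P0 (Nat.find hEx + d + 1)) := by
    intro d
    induction d with
    | zero => intro _; exact hk2
    | succ n ih =>
      intro hlt
      have hprev := ih (by omega)
      rcases cover0 htree C hlt with h | h
      · exact h
      · exact (mono0 htree C hlt hprev h).elim
  refine ⟨Nat.find hEx, hk0, hk1, ?_, ?_⟩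
  · intro j hjk
    rcases cover0 htree C (show j < C.P0.len by omega) with h | h
    · exact ((Nat.find_min hEx hjk) ⟨by omega, h⟩).elim
    · exact h
  · intro j hjle hjlt
    have := suf (j - Nat.find hEx) (by omega)
    rwa [show Nat.find hEx + (j - Nat.find hEx) = j by omega] at this

/-- Junctions of two paths sharing their sink agree. -/
lemma sink0 (htree : IsTemporalOrientedTree lab) (C : AltCfg lab) {k0 k1 : ℕ}
    (h0 : SplitAt C.P0 C.P1 C.P5 k0) (h1 : SplitAt C.P1 C.P0 C.P2 k1) :
    pv C.P0 k0 = pv C.P1 k1 := by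
  obtain ⟨h01, h02, h0pre, h0suf⟩ := h0
  obtain ⟨h11, h12, h1pre, h1suf⟩ := h1
  obtain ⟨m, hm, hm1, hm2⟩ := h0suf k0 le_rfl h02
  have hm_ge : k1 ≤ m := by
    by_contra hc
    push_neg at hc
    have harc2 := h1pre m hc
    rw [hm1, hm2] at harc2
    exact disj0 htree C.reflect ⟨m, hm, hm1, hm2⟩ ⟨k0, h02, rfl, rfl⟩ harc2
  rcases Nat.eq_or_lt_of_le hm_ge with heq | hlt
  · rw [heq]
    exact hm1.symm
  · exfalso
    obtain ⟨l, hl, hl1, hl2⟩ := h1suf (m-1) (by omega) (by omega)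
    have heq2 : pv C.P0 (l+1) = pv C.P0 k0 := by
      rw [hl2, show m - 1 + 1 = m by omega, hm1]
    have hlk : l + 1 = k0 := pv_inj C.P0 (by omega) (by omega) heq2
    have harc5 := h0pre l (by omega)
    have harc1 : HasArc C.P1 (pv C.P0 l) (pv C.P0 (l+1)) :=
      ⟨m-1, by omega, hl1.symm, hl2.symm⟩
    exact disj0 htree C ⟨l, by omega, rfl, rfl⟩ harc1 harc5

/-- Junctions of two paths sharing their source agree. -/
lemma source0 (htree : IsTemporalOrientedTree lab) (C : AltCfg lab) {k1 k2 : ℕ}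
    (h1 : SplitAt C.P1 C.P0 C.P2 k1) (h2 : SplitAt C.P2 C.P3 C.P1 k2) :
    pv C.P1 k1 = pv C.P2 k2 := by
  obtain ⟨h11, h12, h1pre, h1suf⟩ := h1
  obtain ⟨h21, h22, h2pre, h2suf⟩ := h2
  obtain ⟨e2a, _⟩ := fromTo_pv C.f1
  obtain ⟨e2b, _⟩ := fromTo_pv C.f2
  have claim : ∀ j, j ≤ k1 → j ≤ k2 → pv C.P1 j = pv C.P2 j := by
    intro j
    induction j with
    | zero =>
      intro _ _
      rw [e2a, e2b]
    | succ n ih =>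
      intro hn1 hn2
      have hih := ih (by omega) (by omega)
      obtain ⟨l, hl, hl1, hl2⟩ := h1pre n (by omega)
      have hln : l = n := pv_inj C.P2 (by omega) (by omega) (hl1.trans hih)
      rw [hln] at hl2
      exact hl2.symm
  rcases lt_trichotomy k1 k2 with hlt | heq | hgt
  · exfalso
    have hv := claim k1 le_rfl (by omega)
    obtain ⟨l, hl, hl1, hl2⟩ := h2pre k1 hlt
    have hlk : l = k1 := pv_inj C.P1 (by omega) (by omega) (hl1.trans hv.symm)
    rw [hlk] at hl2
    have hA0 := h1suf k1 le_rfl h12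
    have hA2 : HasArc C.P2 (pv C.P1 k1) (pv C.P1 (k1+1)) := ⟨k1, by omega, hv.symm, hl2.symm⟩
    exact disj0 htree C.reflect ⟨k1, h12, rfl, rfl⟩ hA0 hA2
  · subst heq
    exact claim k1 le_rfl le_rfl
  · exfalso
    have hv := claim k2 (by omega) le_rfl
    obtain ⟨l, hl, hl1, hl2⟩ := h1pre k2 hgt
    have hlk : l = k2 := pv_inj C.P2 (by omega) (by omega) (hl1.trans hv)
    rw [hlk] at hl2
    have hA3 := h2suf k2 le_rfl h22
    have hA1 : HasArc C.P1 (pv C.P2 k2) (pv C.P2 (k2+1)) := ⟨k2, by omega, hv, hl2.symm⟩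
    exact disj0 htree C.rot2 ⟨k2, h22, rfl, rfl⟩ hA3 hA1

/-- The alternating configuration is impossible. -/
lemma caseB (htree : IsTemporalOrientedTree lab) (C : AltCfg lab) : False := by
  obtain ⟨k0, s0⟩ := split0 htree C
  obtain ⟨k1, s1⟩ := split0 htree C.reflect
  obtain ⟨k2, s2⟩ := split0 htree C.rot2
  obtain ⟨k3, s3⟩ := split0 htree C.rot2.reflect
  obtain ⟨k4, s4⟩ := split0 htree C.rot2.rot2
  obtain ⟨k5, s5⟩ := split0 htree C.rot2.rot2.reflect
  have e01 : pv C.P0 k0 = pv C.P1 k1 := sink0 htree C s0 s1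
  have e12 : pv C.P1 k1 = pv C.P2 k2 := source0 htree C s1 s2
  have e23 : pv C.P2 k2 = pv C.P3 k3 := sink0 htree C.rot2 s2 s3
  have e34 : pv C.P3 k3 = pv C.P4 k4 := source0 htree C.rot2 s3 s4
  have e45 : pv C.P4 k4 = pv C.P5 k5 := sink0 htree C.rot2.rot2 s4 s5
  have h13 : pv C.P1 k1 = pv C.P3 k3 := e12.trans e23
  have h35 : pv C.P3 k3 = pv C.P5 k5 := e34.trans e45
  have h15 : pv C.P1 k1 = pv C.P5 k5 := h13.trans h35
  obtain ⟨g2, g1⟩ := fromTo_pv C.f1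
  obtain ⟨g4, g3⟩ := fromTo_pv C.f3
  obtain ⟨g0, g5⟩ := fromTo_pv C.f5
  have hA1 : pt C.P1 (k1-1) < pt C.P1 k1 := pt_lt C.P1 (by have := s1.1; omega) s1.2.1
  have hA3 : pt C.P3 (k3-1) < pt C.P3 k3 := pt_lt C.P3 (by have := s3.1; omega) s3.2.1
  have hA5 : pt C.P5 (k5-1) < pt C.P5 k5 := pt_lt C.P5 (by have := s5.1; omega) s5.2.1
  have hD5 : pt C.P5 k5 ≤ pt C.P1 (k1-1) := by
    by_contra hc
    push_neg at hc
    obtain ⟨R, hR1, hR2⟩ := combine htree C.P1 C.P5 s1.1 (le_of_lt s1.2.1) s5.2.1 h15 hc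
    exact C.n25 (tc_of_mem (g2 ▸ hR1 0 (by omega)) (g5 ▸ hR2 C.P5.len (le_of_lt s5.2.1) le_rfl))
  have hD1 : pt C.P1 k1 ≤ pt C.P3 (k3-1) := by
    by_contra hc
    push_neg at hc
    obtain ⟨R, hR1, hR2⟩ := combine htree C.P3 C.P1 s3.1 (le_of_lt s3.2.1) s1.2.1 h13.symm hc
    exact C.n14 (tc_symm (tc_of_mem (g4 ▸ hR1 0 (by omega)) (g1 ▸ hR2 C.P1.len (le_of_lt s1.2.1) le_rfl)))
  have hD3 : pt C.P3 k3 ≤ pt C.P5 (k5-1) := by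
    by_contra hc
    push_neg at hc
    obtain ⟨R, hR1, hR2⟩ := combine htree C.P5 C.P3 s5.1 (le_of_lt s5.2.1) s3.2.1 h35.symm hc
    exact C.n03 (tc_of_mem (g0 ▸ hR1 0 (by omega)) (g3 ▸ hR2 C.P3.len (le_of_lt s3.2.1) le_rfl))
  omega

end C6
namespace C6
open SimpleGraph

variable {V : Type*} {lab : V → V → Finset ℕ}

lemma caseA' (htree : IsTemporalOrientedTree lab) {v0 v1 v2 v3 v4 v5 : V}
    {P0 P1 : TPath lab} (hP0 : P0.FromTo v0 v1) (hP1 : P1.FromTo v1 v2)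
    (hQ2 : (∃ Q : TPath lab, Q.FromTo v2 v3) ∨ (∃ Q : TPath lab, Q.FromTo v3 v2))
    (hQ3 : (∃ Q : TPath lab, Q.FromTo v3 v4) ∨ (∃ Q : TPath lab, Q.FromTo v4 v3))
    (hQ4 : (∃ Q : TPath lab, Q.FromTo v4 v5) ∨ (∃ Q : TPath lab, Q.FromTo v5 v4))
    (hQ5 : (∃ Q : TPath lab, Q.FromTo v5 v0) ∨ (∃ Q : TPath lab, Q.FromTo v0 v5))
    (hne01 : v0 ≠ v1)
    (h02 : ¬ TempConnected lab v0 v2) (h13 : ¬ TempConnected lab v1 v3)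
    (h03 : ¬ TempConnected lab v0 v3) (h14 : ¬ TempConnected lab v1 v4)
    (h04 : ¬ TempConnected lab v0 v4) (h15 : ¬ TempConnected lab v1 v5) : False := by
  obtain ⟨Q2, g2⟩ : ∃ Q : TPath lab, Q.FromTo v2 v3 ∨ Q.FromTo v3 v2 :=
    hQ2.elim (fun ⟨Q, h⟩ => ⟨Q, Or.inl h⟩) (fun ⟨Q, h⟩ => ⟨Q, Or.inr h⟩)
  obtain ⟨Q3, g3⟩ : ∃ Q : TPath lab, Q.FromTo v3 v4 ∨ Q.FromTo v4 v3 :=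
    hQ3.elim (fun ⟨Q, h⟩ => ⟨Q, Or.inl h⟩) (fun ⟨Q, h⟩ => ⟨Q, Or.inr h⟩)
  obtain ⟨Q4, g4⟩ : ∃ Q : TPath lab, Q.FromTo v4 v5 ∨ Q.FromTo v5 v4 :=
    hQ4.elim (fun ⟨Q, h⟩ => ⟨Q, Or.inl h⟩) (fun ⟨Q, h⟩ => ⟨Q, Or.inr h⟩)
  obtain ⟨Q5, g5⟩ : ∃ Q : TPath lab, Q.FromTo v5 v0 ∨ Q.FromTo v0 v5 :=
    hQ5.elim (fun ⟨Q, h⟩ => ⟨Q, Or.inl h⟩) (fun ⟨Q, h⟩ => ⟨Q, Or.inr h⟩)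
  exact caseA htree hP0 hP1 g2 g3 g4 g5 hne01 h02 h13 h03 h14 h04 h15

lemma tc_dstyle {u v : V} (h : TempConnected lab u v) :
    (∃ P : TPath lab, P.FromTo u v) ∨ (∃ P : TPath lab, P.FromTo v u) := by
  obtain ⟨P, h'⟩ := tc_exists_fromto h
  exact h'.elim (fun h => Or.inl ⟨P, h⟩) (fun h => Or.inr ⟨P, h⟩)

set_option maxHeartbeats 3200000 in
lemma hex6 (htree : IsTemporalOrientedTree lab) (c0 c1 c2 c3 c4 c5 : V)
    (E0 : (∃ Q : TPath lab, Q.FromTo c0 c1) ∨ (∃ Q : TPath lab, Q.FromTo c1 c0))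
    (E1 : (∃ Q : TPath lab, Q.FromTo c1 c2) ∨ (∃ Q : TPath lab, Q.FromTo c2 c1))
    (E2 : (∃ Q : TPath lab, Q.FromTo c2 c3) ∨ (∃ Q : TPath lab, Q.FromTo c3 c2))
    (E3 : (∃ Q : TPath lab, Q.FromTo c3 c4) ∨ (∃ Q : TPath lab, Q.FromTo c4 c3))
    (E4 : (∃ Q : TPath lab, Q.FromTo c4 c5) ∨ (∃ Q : TPath lab, Q.FromTo c5 c4))
    (E5 : (∃ Q : TPath lab, Q.FromTo c5 c0) ∨ (∃ Q : TPath lab, Q.FromTo c0 c5))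
    (m01 : c0 ≠ c1) (m12 : c1 ≠ c2) (m23 : c2 ≠ c3) (m34 : c3 ≠ c4)
    (m45 : c4 ≠ c5) (m50 : c5 ≠ c0)
    (n02 : ¬ TempConnected lab c0 c2) (n03 : ¬ TempConnected lab c0 c3)
    (n04 : ¬ TempConnected lab c0 c4) (n13 : ¬ TempConnected lab c1 c3)
    (n14 : ¬ TempConnected lab c1 c4) (n15 : ¬ TempConnected lab c1 c5)
    (n24 : ¬ TempConnected lab c2 c4) (n25 : ¬ TempConnected lab c2 c5)
    (n35 : ¬ TempConnected lab c3 c5) : False := by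
  have n20 : ¬ TempConnected lab c2 c0 := fun h => n02 (tc_symm h)
  have n30 : ¬ TempConnected lab c3 c0 := fun h => n03 (tc_symm h)
  have n40 : ¬ TempConnected lab c4 c0 := fun h => n04 (tc_symm h)
  have n31 : ¬ TempConnected lab c3 c1 := fun h => n13 (tc_symm h)
  have n41 : ¬ TempConnected lab c4 c1 := fun h => n14 (tc_symm h)
  have n51 : ¬ TempConnected lab c5 c1 := fun h => n15 (tc_symm h)
  have n42 : ¬ TempConnected lab c4 c2 := fun h => n24 (tc_symm h)
  have n52 : ¬ TempConnected lab c5 c2 := fun h => n25 (tc_symm h)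
  have n53 : ¬ TempConnected lab c5 c3 := fun h => n35 (tc_symm h)
  have F0 := E0
  have F1 := E1
  have F2 := E2
  have F3 := E3
  have F4 := E4
  have F5 := E5
  rcases F0 with ⟨Q0, h0⟩ | ⟨Q0, h0⟩ <;>
  rcases F1 with ⟨Q1, h1⟩ | ⟨Q1, h1⟩ <;>
  rcases F2 with ⟨Q2, h2⟩ | ⟨Q2, h2⟩ <;>
  rcases F3 with ⟨Q3, h3⟩ | ⟨Q3, h3⟩ <;>
  rcases F4 with ⟨Q4, h4⟩ | ⟨Q4, h4⟩ <;>
  rcases F5 with ⟨Q5, h5⟩ | ⟨Q5, h5⟩ <;>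
  first
  | exact caseA' htree h0 h1 E2 E3 E4 E5 m01 n02 n13 n03 n14 n04 n15
  | exact caseA' htree h1 h2 E3 E4 E5 E0 m12 n13 n24 n14 n25 n15 n20
  | exact caseA' htree h2 h3 E4 E5 E0 E1 m23 n24 n35 n25 n30 n20 n31
  | exact caseA' htree h3 h4 E5 E0 E1 E2 m34 n35 n40 n30 n41 n31 n42
  | exact caseA' htree h4 h5 E0 E1 E2 E3 m45 n40 n51 n41 n52 n42 n53
  | exact caseA' htree h5 h0 E1 E2 E3 E4 m50 n51 n02 n52 n03 n53 n04
  | exact caseA' htree h1 h0 E5.symm E4.symm E3.symm E2.symm m12.symm n20 n15 n25 n14 n24 n13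
  | exact caseA' htree h2 h1 E0.symm E5.symm E4.symm E3.symm m23.symm n31 n20 n30 n25 n35 n24
  | exact caseA' htree h3 h2 E1.symm E0.symm E5.symm E4.symm m34.symm n42 n31 n41 n30 n40 n35
  | exact caseA' htree h4 h3 E2.symm E1.symm E0.symm E5.symm m45.symm n53 n42 n52 n41 n51 n40
  | exact caseA' htree h5 h4 E3.symm E2.symm E1.symm E0.symm m50.symm n04 n53 n03 n52 n02 n51
  | exact caseA' htree h0 h5 E4.symm E3.symm E2.symm E1.symm m01.symm n15 n04 n14 n03 n13 n02
  | exact caseB htree ⟨c0, c1, c2, c3, c4, c5, Q0, Q1, Q2, Q3, Q4, Q5,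
      h0, h1, h2, h3, h4, h5, m01, m12, m23, m34, m45, m50,
      n02, n03, n04, n13, n14, n15, n24, n25, n35⟩
  | exact caseB htree ⟨c1, c2, c3, c4, c5, c0, Q1, Q2, Q3, Q4, Q5, Q0,
      h1, h2, h3, h4, h5, h0, m12, m23, m34, m45, m50, m01,
      n13, n14, n15, n24, n25, n20, n35, n30, n40⟩

end C6
/-- The connectivity graph of a temporal oriented tree contains no induced 6-cycle. -/
theorem connGraph_no_c6 {V : Type*} [Fintype V] (lab : V → V → Finset ℕ)
    (hpos : PositiveLabels lab) (htree : IsTemporalOrientedTree lab) :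
    ¬ ∃ c : Fin 6 → V, IsInducedCycle (connGraph lab) 6 c := by
  rintro ⟨c, hinj, hadj⟩
  have ne : ∀ i j : Fin 6, i ≠ j → c i ≠ c j := fun i j hij h => hij (hinj h)
  have adj : ∀ i j : Fin 6, ((i.val + 1) % 6 = j.val ∨ (j.val + 1) % 6 = i.val) →
      TempConnected lab (c i) (c j) := fun i j h => ((hadj i j).mpr h).2
  have nadj : ∀ i j : Fin 6, i ≠ j → ¬((i.val + 1) % 6 = j.val ∨ (j.val + 1) % 6 = i.val) →
      ¬ TempConnected lab (c i) (c j) := fun i j hij hcons htc =>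
    hcons ((hadj i j).mp ⟨ne i j hij, htc⟩)
  exact C6.hex6 htree (c 0) (c 1) (c 2) (c 3) (c 4) (c 5)
    (C6.tc_dstyle (adj 0 1 (by decide)))
    (C6.tc_dstyle (adj 1 2 (by decide)))
    (C6.tc_dstyle (adj 2 3 (by decide)))
    (C6.tc_dstyle (adj 3 4 (by decide)))
    (C6.tc_dstyle (adj 4 5 (by decide)))
    (C6.tc_dstyle (adj 5 0 (by decide)))
    (ne 0 1 (by decide)) (ne 1 2 (by decide)) (ne 2 3 (by decide))
    (ne 3 4 (by decide)) (ne 4 5 (by decide)) (ne 5 0 (by decide))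
    (nadj 0 2 (by decide) (by decide)) (nadj 0 3 (by decide) (by decide))
    (nadj 0 4 (by decide) (by decide)) (nadj 1 3 (by decide) (by decide))
    (nadj 1 4 (by decide) (by decide)) (nadj 1 5 (by decide) (by decide))
    (nadj 2 4 (by decide) (by decide)) (nadj 2 5 (by decide) (by decide))
    (nadj 3 5 (by decide) (by decide))
end

section
/- Let 𝒯 = (T, λ) be a temporal oriented tree and let G be its connectivity graph. Then G contains no even hole, i.e., no induced cycle of even length at least 6. -/
/-! ### Auxiliary machinery -/

namespace TPath
variable {V : Type*} {lab : V → V → Finset ℕ}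

/-- The segment of a temporal path between positions `a ≤ b`. -/
def seg (P : TPath lab) (a b : ℕ) (hab : a ≤ b) (hb : b ≤ P.len) : TPath lab where
  len := b - a
  verts i := P.verts ⟨a + i.val, by have := i.isLt; omega⟩
  times i := P.times ⟨a + i.val, by have := i.isLt; omega⟩
  inj := by
    intro x y h
    have h2 := P.inj h
    have h3 : a + x.val = a + y.val := congrArg Fin.val h2
    exact Fin.ext (by omega)
  mono := by
    intro x y h
    exact P.mono (by simp only [Fin.lt_def] at h ⊢; omega)
  mem_lab := by
    intro i
    have h := P.mem_lab ⟨a + i.val, by have := i.isLt; omega⟩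
    have e1 : (⟨a + i.val, by have := i.isLt; omega⟩ : Fin P.len).castSucc
        = ⟨a + (i.castSucc).val, by have := i.isLt; omega⟩ := Fin.ext rfl
    have e2 : (⟨a + i.val, by have := i.isLt; omega⟩ : Fin P.len).succ
        = ⟨a + (i.succ).val, by have := i.isLt; omega⟩ := Fin.ext (by simp [Nat.add_assoc])
    rw [e1, e2] at h
    exact h

lemma seg_fromTo (P : TPath lab) (a b : ℕ) (hab : a ≤ b) (hb : b ≤ P.len) :
    (P.seg a b hab hb).FromTo (P.verts ⟨a, by omega⟩) (P.verts ⟨b, by omega⟩) := by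
  constructor
  · show P.verts _ = _
    exact congrArg P.verts (Fin.ext (by simp))
  · show P.verts _ = _
    exact congrArg P.verts (Fin.ext (by simp [seg]; omega))

lemma seg_times (P : TPath lab) (a b : ℕ) (hab : a ≤ b) (hb : b ≤ P.len) (i : Fin (b - a)) :
    (P.seg a b hab hb).times i = P.times ⟨a + i.val, by have := i.isLt; omega⟩ := rfl

lemma seg_verts (P : TPath lab) (a b : ℕ) (hab : a ≤ b) (hb : b ≤ P.len) (i : Fin (b - a + 1)) :
    (P.seg a b hab hb).verts i = P.verts ⟨a + i.val, by have := i.isLt; omega⟩ := rfl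

lemma mem_vertexSet_iff {P : TPath lab} {x : V} : x ∈ P.vertexSet ↔ ∃ i, P.verts i = x :=
  Iff.rfl

/-- Composition of two temporal paths with a time gap, shortcutting repeated vertices. -/
lemma comp : ∀ (P R : TPath lab) (u v w : V), P.FromTo u v → R.FromTo v w →
    (∀ i j, P.times i < R.times j) → ∃ S : TPath lab, S.FromTo u w := by
  suffices H : ∀ N : ℕ, ∀ (P R : TPath lab) (u v w : V), P.len + R.len ≤ N →
      P.FromTo u v → R.FromTo v w → (∀ i j, P.times i < R.times j) →
      ∃ S : TPath lab, S.FromTo u w by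
    exact fun P R u v w hP hR ht => H (P.len + R.len) P R u v w le_rfl hP hR ht
  intro N
  induction N using Nat.strong_induction_on with
  | _ N ih =>
    intro P R u v w hN hP hR ht
    by_cases hP0 : P.len = 0
    · -- u = v
      have : u = v := by
        rw [← hP.1, ← hP.2]
        exact congrArg P.verts (Fin.ext (by simp [hP0]))
      exact ⟨R, by rw [← this] at hR; exact hR⟩
    by_cases hR0 : R.len = 0
    · have : v = w := by
        rw [← hR.1, ← hR.2]
        exact congrArg R.verts (Fin.ext (by simp [hR0]))
      exact ⟨P, by rw [this] at hP; exact hP⟩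
    by_cases hco : ∃ (a : Fin (P.len+1)) (b : Fin (R.len+1)),
        P.verts a = R.verts b ∧ (a.val < P.len ∨ 0 < b.val)
    · obtain ⟨a, b, hab, hor⟩ := hco
      have h1 : a.val ≤ P.len := by omega
      have h2 : b.val ≤ R.len := by omega
      refine ih (a.val + (R.len - b.val)) (by omega)
        (P.seg 0 a.val (by omega) h1) (R.seg b.val R.len h2 le_rfl)
        u (P.verts a) w ?_ ?_ ?_ ?_
      · simp only [seg]; omega
      · have hse := P.seg_fromTo 0 a.val (by omega) h1
        constructor
        · rw [hse.1, ← hP.1]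
          try exact congrArg P.verts (Fin.ext rfl)
        · rw [hse.2]
          try exact congrArg P.verts (Fin.ext rfl)
      · have hse := R.seg_fromTo b.val R.len h2 le_rfl
        constructor
        · rw [hse.1, hab]
          try exact congrArg R.verts (Fin.ext rfl)
        · rw [hse.2, ← hR.2]
          try exact congrArg R.verts (Fin.ext rfl)
      · intro i j
        show P.times _ < R.times _
        exact ht _ _
    · -- no nontrivial coincidence: concatenate
      push_neg at hco
      refine ⟨⟨P.len + R.len,
        fun i => if h : i.val ≤ P.len then P.verts ⟨i.val, by omega⟩
          else R.verts ⟨i.val - P.len, by have := i.isLt; omega⟩,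
        fun i => if h : i.val < P.len then P.times ⟨i.val, h⟩
          else R.times ⟨i.val - P.len, by have := i.isLt; omega⟩,
        ?_, ?_, ?_⟩, ?_, ?_⟩
      · -- injectivity
        intro x y hxy
        by_cases hx : x.val ≤ P.len <;> by_cases hy : y.val ≤ P.len <;>
          simp only [hx, hy, dif_pos, dif_neg, not_le] at hxy
        · exact Fin.ext (congrArg Fin.val (P.inj hxy) : _)
        · have hcc := hco _ _ hxy
          have h1 : y.val - P.len ≤ 0 := hcc.2
          exact Fin.ext (by omega)
        · have hcc := hco _ _ hxy.symm
          have h1 : x.val - P.len ≤ 0 := hcc.2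
          exact Fin.ext (by omega)
        · have := congrArg Fin.val (R.inj hxy)
          simp only at this
          exact Fin.ext (by omega)
      · -- mono
        intro x y hxy
        have hxy' : x.val < y.val := hxy
        by_cases hx : x.val < P.len <;> by_cases hy : y.val < P.len <;>
          simp only [hx, hy, dif_pos, dif_neg, not_lt]
        · exact P.mono (show (⟨x.val,hx⟩ : Fin P.len) < ⟨y.val,hy⟩ from hxy')
        · exact ht _ _
        · exact absurd hxy' (by omega)
        · refine R.mono ?_
          simp only [Fin.mk_lt_mk]
          omega
      · -- mem_lab
        intro i
        rcases lt_trichotomy i.val P.len with h | h | h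
        · have hc : (i.castSucc).val ≤ P.len := by simp; omega
          have hs : (i.succ).val ≤ P.len := by simp; omega
          simp only [hc, hs, dif_pos, h]
          have hml := P.mem_lab ⟨i.val, h⟩
          have e0 : P.verts (⟨i.val, h⟩ : Fin P.len).castSucc
              = P.verts ⟨(i.castSucc).val, by simp; omega⟩ := congrArg P.verts (Fin.ext rfl)
          have e1 : P.verts (⟨i.val, h⟩ : Fin P.len).succ
              = P.verts ⟨(i.succ).val, by simp; omega⟩ := congrArg P.verts (Fin.ext rfl)
          rw [e0, e1] at hml
          exact hml
        · have hc : (i.castSucc).val ≤ P.len := by simp; omega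
          have hs : ¬ (i.succ).val ≤ P.len := by simp; omega
          have hs' : ¬ i.val < P.len := by omega
          simp only [hc, hs, dif_pos, dif_neg, hs']
          have hR1 : 0 < R.len := by omega
          have := R.mem_lab ⟨0, hR1⟩
          have e0 : R.verts (⟨0, hR1⟩ : Fin R.len).castSucc = P.verts ⟨(i.castSucc).val, by simp; omega⟩ := by
            have : R.verts (⟨0, hR1⟩ : Fin R.len).castSucc = v := by
              rw [← hR.1]; exact congrArg R.verts (Fin.ext rfl)
            rw [this, ← hP.2]
            exact congrArg P.verts (Fin.ext (by simp [Fin.last]; omega))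
          have e1 : R.verts (⟨0, hR1⟩ : Fin R.len).succ = R.verts ⟨(i.succ).val - P.len, by simp; omega⟩ := by
            exact congrArg R.verts (Fin.ext (by simp; omega))
          have e2 : R.times ⟨0, hR1⟩ = R.times ⟨i.val - P.len, by omega⟩ := by
            exact congrArg R.times (Fin.ext (by simp; omega))
          rw [e0, e1, e2] at this
          exact this
        · have hc : ¬ (i.castSucc).val ≤ P.len := by simp; omega
          have hs : ¬ (i.succ).val ≤ P.len := by simp; omega
          have hs' : ¬ i.val < P.len := by omega
          simp only [hc, hs, dif_neg, hs']
          have hlt : i.val - P.len < R.len := by have := i.isLt; omega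
          have hml := R.mem_lab ⟨i.val - P.len, hlt⟩
          have e0 : R.verts (⟨i.val - P.len, hlt⟩ : Fin R.len).castSucc
              = R.verts ⟨(i.castSucc).val - P.len, by simp; omega⟩ :=
            congrArg R.verts (Fin.ext (by simp))
          have e1 : R.verts (⟨i.val - P.len, hlt⟩ : Fin R.len).succ
              = R.verts ⟨(i.succ).val - P.len, by simp; omega⟩ :=
            congrArg R.verts (Fin.ext (by simp; omega))
          rw [e0, e1] at hml
          exact hml
      · -- start
        show (if h : ((0 : Fin (P.len + R.len + 1))).val ≤ P.len then P.verts ⟨(0 : Fin (P.len + R.len + 1)).val, by omega⟩ else R.verts ⟨(0 : Fin (P.len + R.len + 1)).val - P.len, by simp at h⟩) = u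
        split
        · exact (congrArg P.verts (Fin.ext rfl)).trans hP.1
        · exact absurd (Nat.zero_le _) ‹_›
      · -- end
        refine (dif_neg (by simp [Fin.last]; omega)).trans ?_
        exact (congrArg R.verts (Fin.ext (by simp [Fin.last]))).trans hR.2

end TPath

namespace TPath
variable {V : Type*} {lab : V → V → Finset ℕ}

lemma start_mem (P : TPath lab) : P.verts 0 ∈ P.vertexSet := ⟨0, rfl⟩
lemma end_mem (P : TPath lab) : P.verts (Fin.last P.len) ∈ P.vertexSet := ⟨_, rfl⟩

lemma tc_of_mem {P : TPath lab} {x y : V} (hx : x ∈ P.vertexSet) (hy : y ∈ P.vertexSet) :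
    TempConnected lab x y := ⟨P, hx, hy⟩

lemma tc_symm {x y : V} (h : TempConnected lab x y) : TempConnected lab y x := by
  obtain ⟨P, h1, h2⟩ := h; exact ⟨P, h2, h1⟩

/-- From a temporal path containing `u` and `v`, extract one between them. -/
lemma exists_fromTo {u v : V} (h : TempConnected lab u v) (hne : u ≠ v) :
    (∃ P : TPath lab, P.FromTo u v) ∨ (∃ P : TPath lab, P.FromTo v u) := by
  obtain ⟨P, ⟨a, ha⟩, ⟨b, hb⟩⟩ := h
  rcases lt_trichotomy a b with hab | hab | hab
  · left
    refine ⟨P.seg a.val b.val (le_of_lt hab) (by omega), ?_⟩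
    have := P.seg_fromTo a.val b.val (le_of_lt hab) (by omega)
    rwa [show (⟨a.val, by omega⟩ : Fin (P.len+1)) = a from Fin.ext rfl, ha,
      show (⟨b.val, by omega⟩ : Fin (P.len+1)) = b from Fin.ext rfl, hb] at this
  · exact absurd (ha ▸ hab ▸ hb : u = v) hne
  · right
    refine ⟨P.seg b.val a.val (le_of_lt hab) (by omega), ?_⟩
    have := P.seg_fromTo b.val a.val (le_of_lt hab) (by omega)
    rwa [show (⟨b.val, by omega⟩ : Fin (P.len+1)) = b from Fin.ext rfl, hb,
      show (⟨a.val, by omega⟩ : Fin (P.len+1)) = a from Fin.ext rfl, ha] at this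

/-- Splice: enter along `P` to a common vertex, leave along `R`. -/
lemma splice (P R : TPath lab) (p : Fin (P.len+1)) (q : Fin (R.len+1))
    (hz : P.verts p = R.verts q) (hp : 0 < p.val) (hq : q.val < R.len)
    (ht : P.times ⟨p.val - 1, by have := p.isLt; omega⟩ < R.times ⟨q.val, hq⟩) :
    TempConnected lab (P.verts 0) (R.verts (Fin.last R.len)) := by
  have h1 := P.seg_fromTo 0 p.val (by omega) (by have := p.isLt; omega)
  have h2 := R.seg_fromTo q.val R.len (by omega) le_rfl
  rw [show (⟨p.val, by have := p.isLt; omega⟩ : Fin (P.len+1)) = p from Fin.ext rfl, hz] at h1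
  rw [show (⟨q.val, by omega⟩ : Fin (R.len+1)) = q from Fin.ext rfl] at h2
  rw [show (⟨0, by omega⟩ : Fin (P.len+1)) = 0 from Fin.ext rfl] at h1
  rw [show (⟨R.len, by omega⟩ : Fin (R.len+1)) = Fin.last R.len from Fin.ext rfl] at h2
  obtain ⟨S, hS⟩ := comp _ _ _ _ _ h1 h2 (by
    intro i j
    show P.times _ < R.times _
    refine lt_of_le_of_lt (P.mono.monotone ?_) (lt_of_lt_of_le ht (R.mono.monotone ?_))
    · show (0:ℕ) + i.val ≤ p.val - 1
      have := i.isLt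
      simp only [seg] at this
      omega
    · show q.val ≤ q.val + j.val
      omega)
  exact ⟨S, hS.1 ▸ S.start_mem, hS.2 ▸ S.end_mem⟩

/-- Contrapositive of splice: used for the 3-cycle chain of inequalities. -/
lemma chain_ineq (P R : TPath lab) (p : Fin (P.len+1)) (q : Fin (R.len+1))
    (hz : P.verts p = R.verts q) (hp : 0 < p.val) (hq : q.val < R.len)
    (hnot : ¬ TempConnected lab (P.verts 0) (R.verts (Fin.last R.len))) :
    R.times ⟨q.val, hq⟩ ≤ P.times ⟨p.val - 1, by have := p.isLt; omega⟩ := by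
  by_contra hcon
  exact hnot (splice P R p q hz hp hq (by omega))

/-- Dichotomy for two temporal paths sharing a vertex. -/
lemma shared_tc (P R : TPath lab) {z : V} (hzP : z ∈ P.vertexSet) (hzR : z ∈ R.vertexSet) :
    TempConnected lab (P.verts 0) (R.verts (Fin.last R.len)) ∨
    TempConnected lab (R.verts 0) (P.verts (Fin.last P.len)) := by
  obtain ⟨p, hp⟩ := hzP
  obtain ⟨q, hq⟩ := hzR
  by_cases hp0 : p.val = 0
  · left
    refine tc_of_mem ?_ R.end_mem
    have : P.verts 0 = z := by rw [← hp]; exact congrArg P.verts (Fin.ext hp0.symm)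
    rw [this, ← hq]; exact ⟨q, rfl⟩
  by_cases hqL : q.val = R.len
  · left
    refine tc_of_mem P.start_mem ?_
    have : R.verts (Fin.last R.len) = z := by rw [← hq]; exact congrArg R.verts (Fin.ext hqL.symm)
    rw [this, ← hp]; exact ⟨p, rfl⟩
  by_cases hq0 : q.val = 0
  · right
    refine tc_of_mem ?_ P.end_mem
    have : R.verts 0 = z := by rw [← hq]; exact congrArg R.verts (Fin.ext hq0.symm)
    rw [this, ← hp]; exact ⟨p, rfl⟩
  by_cases hpL : p.val = P.len
  · right
    refine tc_of_mem R.start_mem ?_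
    have : P.verts (Fin.last P.len) = z := by rw [← hp]; exact congrArg P.verts (Fin.ext hpL.symm)
    rw [this, ← hq]; exact ⟨q, rfl⟩
  -- interior in both
  have hpi : 0 < p.val := by omega
  have hqi : q.val < R.len := by have := q.isLt; omega
  have hqi0 : 0 < q.val := by omega
  have hpiL : p.val < P.len := by have := p.isLt; omega
  by_cases hcmp : P.times ⟨p.val - 1, by have := p.isLt; omega⟩ < R.times ⟨q.val, hqi⟩
  · exact Or.inl (splice P R p q (hp.trans hq.symm) hpi hqi hcmp)
  · refine Or.inr (splice R P q p (hq.trans hp.symm) hqi0 hpiL ?_)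
    have h1 : R.times ⟨q.val - 1, by omega⟩ < R.times ⟨q.val, hqi⟩ := by
      apply R.mono
      show q.val - 1 < q.val
      omega
    have h2 : P.times ⟨p.val - 1, by have := p.isLt; omega⟩ < P.times ⟨p.val, hpiL⟩ := by
      apply P.mono
      show p.val - 1 < p.val
      omega
    omega

lemma interior {P : TPath lab} {z : V} (p : Fin (P.len+1)) (hp : P.verts p = z)
    (h0 : z ≠ P.verts 0) (hL : z ≠ P.verts (Fin.last P.len)) :
    0 < p.val ∧ p.val < P.len := by
  constructor
  · rcases Nat.eq_zero_or_pos p.val with h | h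
    · have hpe : p = 0 := Fin.ext (by simpa using h)
      exact absurd (hp.symm.trans (congrArg P.verts hpe)) h0
    · exact h
  · rcases eq_or_lt_of_le (Nat.lt_succ_iff.mp p.isLt) with h | h
    · have hpe : p = Fin.last P.len := Fin.ext (by simpa [Fin.last] using h)
      exact absurd (hp.symm.trans (congrArg P.verts hpe)) hL
    · exact h

/-- The cyclic chain of three mutually meeting temporal paths: contradiction. -/
lemma chain3 (P0 P1 P2 : TPath lab) {z : V}
    (h0 : z ∈ P0.vertexSet) (h1 : z ∈ P1.vertexSet) (h2 : z ∈ P2.vertexSet)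
    (i0 : z ≠ P0.verts 0) (e0 : z ≠ P0.verts (Fin.last P0.len))
    (i1 : z ≠ P1.verts 0) (e1 : z ≠ P1.verts (Fin.last P1.len))
    (i2 : z ≠ P2.verts 0) (e2 : z ≠ P2.verts (Fin.last P2.len))
    (n01 : ¬ TempConnected lab (P0.verts 0) (P1.verts (Fin.last P1.len)))
    (n12 : ¬ TempConnected lab (P1.verts 0) (P2.verts (Fin.last P2.len)))
    (n20 : ¬ TempConnected lab (P2.verts 0) (P0.verts (Fin.last P0.len))) : False := by
  obtain ⟨p0, hp0⟩ := h0
  obtain ⟨p1, hp1⟩ := h1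
  obtain ⟨p2, hp2⟩ := h2
  have b0 : 0 < p0.val ∧ p0.val < P0.len := interior p0 hp0 i0 e0
  have b1 : 0 < p1.val ∧ p1.val < P1.len := interior p1 hp1 i1 e1
  have b2 : 0 < p2.val ∧ p2.val < P2.len := interior p2 hp2 i2 e2
  have c01 := chain_ineq P0 P1 p0 p1 (hp0.trans hp1.symm) b0.1 b1.2 n01
  have c12 := chain_ineq P1 P2 p1 p2 (hp1.trans hp2.symm) b1.1 b2.2 n12
  have c20 := chain_ineq P2 P0 p2 p0 (hp2.trans hp0.symm) b2.1 b0.2 n20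
  have m0 : P0.times ⟨p0.val - 1, by omega⟩ < P0.times ⟨p0.val, b0.2⟩ :=
    P0.mono (show p0.val - 1 < p0.val by omega)
  have m1 : P1.times ⟨p1.val - 1, by omega⟩ < P1.times ⟨p1.val, b1.2⟩ :=
    P1.mono (show p1.val - 1 < p1.val by omega)
  have m2 : P2.times ⟨p2.val - 1, by omega⟩ < P2.times ⟨p2.val, b2.2⟩ :=
    P2.mono (show p2.val - 1 < p2.val by omega)
  omega

end TPath

section Walks
variable {V : Type*}

open SimpleGraph

/-- Build a walk from a chain of adjacent vertices. -/
lemma walk_of_chain {G : SimpleGraph V} :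
    ∀ (k : ℕ) (f : Fin (k+1) → V), (∀ i : Fin k, G.Adj (f i.castSucc) (f i.succ)) →
    ∃ w : G.Walk (f 0) (f (Fin.last k)), ∀ x ∈ w.support, ∃ i, f i = x := by
  intro k
  induction k with
  | zero =>
    intro f _
    refine ⟨Walk.nil.copy rfl (congrArg f (Fin.ext rfl)), ?_⟩
    intro x hx
    simp [Walk.support_copy] at hx
    exact ⟨0, hx.symm⟩
  | succ k ih =>
    intro f hadj
    obtain ⟨w', hw'⟩ := ih (fun i => f i.succ) (by
      intro i
      have := hadj i.succ
      have e1 : (i.succ).castSucc = (i.castSucc).succ := Fin.ext (by simp)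
      rw [e1] at this
      exact this)
    have hadj0 := hadj 0
    have e0 : f (0 : Fin (k+1)).castSucc = f 0 := congrArg f (Fin.ext rfl)
    rw [e0] at hadj0
    have eL : f ((Fin.last k).succ) = f (Fin.last (k+1)) := congrArg f (Fin.ext rfl)
    refine ⟨(Walk.cons hadj0 w').copy rfl eL, ?_⟩
    intro x hx
    rw [Walk.support_copy, Walk.support_cons] at hx
    rcases List.mem_cons.mp hx with h | h
    · exact ⟨0, h.symm⟩
    · obtain ⟨i, hi⟩ := hw' x h
      exact ⟨i.succ, hi⟩

/-- Decompose a path at the first vertex belonging to a set `S`. -/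
lemma walk_first {G : SimpleGraph V} (S : Set V) :
    ∀ {a b : V} (p : G.Walk a b), p.IsPath → b ∈ S →
    ∃ (m : V) (p1 : G.Walk a m) (p2 : G.Walk m b), m ∈ S ∧ p1.IsPath ∧
      (∀ x ∈ p1.support, x ∈ S → x = m) ∧ (∀ x ∈ p1.support, x ∈ p.support) ∧
      (∀ x ∈ p2.support, x ∈ p.support) := by
  intro a b p
  induction p with
  | nil =>
    intro _ hb
    exact ⟨_, Walk.nil, Walk.nil, hb, Walk.IsPath.nil,
      fun x hx _ => by simpa using hx, fun x hx => hx, fun x hx => hx⟩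
  | @cons u x b h q ihq =>
    intro hp hb
    by_cases ha : u ∈ S
    · exact ⟨u, Walk.nil, Walk.cons h q, ha, Walk.IsPath.nil, by simp, by simp,
        fun y hy => hy⟩
    · obtain ⟨m, p1, p2, hmS, hp1, hfirst, hs1, hs2⟩ :=
        ihq ((Walk.cons_isPath_iff h q).mp hp).1 hb
      refine ⟨m, Walk.cons h p1, p2, hmS, ?_, ?_, ?_, ?_⟩
      · rw [Walk.cons_isPath_iff]
        refine ⟨hp1, fun hu => ?_⟩
        exact ((Walk.cons_isPath_iff h q).mp hp).2 (hs1 _ hu)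
      · intro y hy hyS
        rcases List.mem_cons.mp (by simpa using hy) with h' | h'
        · exact absurd (h' ▸ hyS) ha
        · exact hfirst y h' hyS
      · intro y hy
        rcases List.mem_cons.mp (by simpa using hy) with h' | h'
        · simp [h']
        · simp [hs1 y h']
      · intro y hy
        simp [hs2 y hy]

/-- Median of three paths forming a triangle in a tree. -/
lemma tree_median {G : SimpleGraph V} (hG : G.IsTree) {u v w : V}
    (p : G.Walk u v) (hp : p.IsPath) (q : G.Walk v w) (hq : q.IsPath)
    (r : G.Walk u w) (hr : r.IsPath) :
    ∃ m, m ∈ p.support ∧ m ∈ q.support ∧ m ∈ r.support := by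
  classical
  have hu : u ∈ r.support := r.start_mem_support
  obtain ⟨m, p1, p2, hmS, hp1, hfirst, hs1, _⟩ :=
    walk_first {x | x ∈ r.support} p.reverse hp.reverse hu
  have hm : m ∈ r.support := hmS
  set r2 := r.dropUntil m hm with hr2def
  have hr2 : r2.IsPath := hr.dropUntil hm
  have hW : (p1.append r2).IsPath := by
    rw [Walk.isPath_def, Walk.support_append]
    refine List.Nodup.append ((Walk.isPath_def _).mp hp1)
      (List.Nodup.sublist (List.tail_sublist _) ((Walk.isPath_def _).mp hr2)) ?_
    intro y hy1 hy2
    have hyr : y ∈ r.support := Walk.support_dropUntil_subset r hm (List.mem_of_mem_tail hy2)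
    have : y = m := hfirst y hy1 hyr
    subst this
    have : y ∉ r2.support.tail := by
      have hnd := (Walk.isPath_def _).mp hr2
      have : r2.support = y :: r2.support.tail := by
        rw [← Walk.support_eq_cons]
      rw [this] at hnd
      exact (List.nodup_cons.mp hnd).1
    exact this hy2
  have huniq := (hG.existsUnique_path v w).unique hW hq
  refine ⟨m, ?_, ?_, hm⟩
  · have : m ∈ p1.support := Walk.end_mem_support p1
    have := hs1 m this
    rwa [Walk.support_reverse, List.mem_reverse] at this
  · rw [← huniq]
    rw [Walk.mem_support_append_iff]
    exact Or.inl (Walk.end_mem_support p1)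

end Walks


/-- The connectivity graph of a temporal oriented tree contains no even hole. -/
theorem connGraph_no_even_hole {V : Type*} [Fintype V] (lab : V → V → Finset ℕ)
    (hpos : PositiveLabels lab) (htree : IsTemporalOrientedTree lab) :
    ¬ ∃ n : ℕ, 6 ≤ n ∧ Even n ∧ ∃ c : Fin n → V, IsInducedCycle (connGraph lab) n c := by
  classical
  rintro ⟨n, hn, -, c, hcinj, hcadj⟩
  obtain ⟨hG, -⟩ := htree
  have hn0 : 0 < n := by omega
  set cc : ℕ → V := fun j => c ⟨j % n, Nat.mod_lt j hn0⟩ with hccdef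
  -- wrap-around identities
  have hccn : cc n = cc 0 := by
    rw [hccdef]
    exact congrArg c (Fin.ext (by simp))
  have hccn1 : cc (n+1) = cc 1 := by
    rw [hccdef]
    exact congrArg c (Fin.ext (Nat.add_mod_left n 1))
  -- non-adjacent cycle vertices are not temporally connected
  have noTCv : ∀ i j : ℕ, i < n → j < n →
      (i ≠ j ∧ i + 1 ≠ j ∧ j + 1 ≠ i ∧ ¬(i = 0 ∧ j = n - 1) ∧ ¬(j = 0 ∧ i = n - 1)) →
      ¬ TempConnected lab (cc i) (cc j) := by
    intro i j hi hj hc htc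
    obtain ⟨h0, h1, h2, h3, h4⟩ := hc
    have hne : cc i ≠ cc j := by
      rw [hccdef]
      intro he
      have := congrArg Fin.val (hcinj he)
      simp only [Nat.mod_eq_of_lt hi, Nat.mod_eq_of_lt hj] at this
      exact h0 this
    have hA : (connGraph lab).Adj (c ⟨i % n, Nat.mod_lt i hn0⟩) (c ⟨j % n, Nat.mod_lt j hn0⟩) := by
      refine ⟨?_, ?_⟩
      · rw [hccdef] at hne; exact hne
      · show TempConnected lab (cc i) (cc j)
        exact htc
    have hcons := (hcadj _ _).mp hA
    simp only [Nat.mod_eq_of_lt hi, Nat.mod_eq_of_lt hj] at hcons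
    rcases hcons with h | h
    · rcases Nat.lt_or_ge (i+1) n with hlt | hge
      · rw [Nat.mod_eq_of_lt hlt] at h; exact h1 h
      · have he : i + 1 = n := by omega
        rw [he, Nat.mod_self] at h
        exact h4 ⟨h.symm, by omega⟩
    · rcases Nat.lt_or_ge (j+1) n with hlt | hge
      · rw [Nat.mod_eq_of_lt hlt] at h; exact h2 h
      · have he : j + 1 = n := by omega
        rw [he, Nat.mod_self] at h
        exact h3 ⟨h.symm, by omega⟩
  -- consecutive cycle vertices are adjacent in the connectivity graph
  have hAdjcons : ∀ j : ℕ, (connGraph lab).Adj (cc j) (cc (j+1)) := by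
    intro j
    have : ((j % n) + 1) % n = (j+1) % n := by
      conv_rhs => rw [Nat.add_mod]
      rw [Nat.mod_eq_of_lt (show 1 < n by omega)]
    have hA := (hcadj ⟨j % n, Nat.mod_lt j hn0⟩ ⟨(j+1) % n, Nat.mod_lt (j+1) hn0⟩).mpr
      (Or.inl this)
    rw [hccdef]
    exact hA
  -- choose temporal paths realizing consecutive connections
  have hQex : ∀ j : ℕ, ∃ P : TPath lab,
      P.FromTo (cc j) (cc (j+1)) ∨ P.FromTo (cc (j+1)) (cc j) := by
    intro j
    rcases TPath.exists_fromTo (hAdjcons j).2 (hAdjcons j).1 with ⟨P, hP⟩ | ⟨P, hP⟩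
    exacts [⟨P, Or.inl hP⟩, ⟨P, Or.inr hP⟩]
  choose Q hQdir using hQex
  have hccS : ∀ j : ℕ, cc j ∈ (Q j).vertexSet ∧ cc (j+1) ∈ (Q j).vertexSet := by
    intro j
    rcases hQdir j with h | h
    · exact ⟨h.1 ▸ (Q j).start_mem, h.2 ▸ (Q j).end_mem⟩
    · exact ⟨h.2 ▸ (Q j).end_mem, h.1 ▸ (Q j).start_mem⟩
  -- walks in the underlying tree along each temporal path
  have hWj : ∀ j : ℕ, ∃ w : (underlyingGraph lab).Walk (cc j) (cc (j+1)),
      ∀ x ∈ w.support, x ∈ (Q j).vertexSet := by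
    intro j
    have hadjQ : ∀ i : Fin (Q j).len,
        (underlyingGraph lab).Adj ((Q j).verts i.castSucc) ((Q j).verts i.succ) := by
      intro i
      refine ⟨(Q j).inj.ne (Fin.castSucc_lt_succ (i := i)).ne, Or.inl ⟨(Q j).times i, (Q j).mem_lab i⟩⟩
    obtain ⟨w0, hw0⟩ := walk_of_chain (Q j).len (Q j).verts hadjQ
    rcases hQdir j with h | h
    · refine ⟨w0.copy h.1 h.2, ?_⟩
      intro x hx
      rw [SimpleGraph.Walk.support_copy] at hx
      exact hw0 x hx
    · refine ⟨(w0.copy h.1 h.2).reverse, ?_⟩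
      intro x hx
      rw [SimpleGraph.Walk.support_reverse, List.mem_reverse,
        SimpleGraph.Walk.support_copy] at hx
      exact hw0 x hx
  -- concatenated walks along arcs of the cycle
  have arcwalk : ∀ a b : ℕ, a ≤ b → ∃ w : (underlyingGraph lab).Walk (cc a) (cc b),
      ∀ x ∈ w.support, x = cc b ∨ ∃ j, a ≤ j ∧ j < b ∧ x ∈ (Q j).vertexSet := by
    intro a b hab
    induction b, hab using Nat.le_induction with
    | base => exact ⟨SimpleGraph.Walk.nil, by intro x hx; left; simpa using hx⟩
    | succ b hab ih =>
      obtain ⟨w1, hw1⟩ := ih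
      obtain ⟨w2, hw2⟩ := hWj b
      refine ⟨w1.append w2, ?_⟩
      intro x hx
      rcases (SimpleGraph.Walk.mem_support_append_iff _ _).mp hx with h | h
      · rcases hw1 x h with h' | ⟨j, hj1, hj2, hj3⟩
        · exact Or.inr ⟨b, by omega, by omega, h' ▸ (hccS b).1⟩
        · exact Or.inr ⟨j, by omega, by omega, hj3⟩
      · exact Or.inr ⟨b, by omega, by omega, hw2 x h⟩
  -- the median vertex
  obtain ⟨w13, hw13⟩ := arcwalk 1 3 (by omega)
  obtain ⟨w35, hw35⟩ := arcwalk 3 5 (by omega)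
  obtain ⟨w5n, hw5n⟩ := arcwalk 5 (n+1) (by omega)
  obtain ⟨m, hm13, hm35, hm15⟩ := tree_median hG
    w13.bypass (SimpleGraph.Walk.bypass_isPath _)
    w35.bypass (SimpleGraph.Walk.bypass_isPath _)
    ((w5n.copy rfl hccn1).reverse.bypass) (SimpleGraph.Walk.bypass_isPath _)
  have hma : ∃ a, (a = 1 ∨ a = 2) ∧ m ∈ (Q a).vertexSet := by
    rcases hw13 m (SimpleGraph.Walk.support_bypass_subset _ hm13) with h | ⟨j, hj1, hj2, hj3⟩
    · exact ⟨2, Or.inr rfl, h ▸ (hccS 2).2⟩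
    · rcases (by omega : j = 1 ∨ j = 2) with h' | h' <;> exact ⟨j, by omega, hj3⟩
  have hmb : ∃ b, (b = 3 ∨ b = 4) ∧ m ∈ (Q b).vertexSet := by
    rcases hw35 m (SimpleGraph.Walk.support_bypass_subset _ hm35) with h | ⟨j, hj1, hj2, hj3⟩
    · exact ⟨4, Or.inr rfl, h ▸ (hccS 4).2⟩
    · exact ⟨j, by omega, hj3⟩
  have hmc : ∃ jc, 5 ≤ jc ∧ jc ≤ n ∧ m ∈ (Q jc).vertexSet := by
    have hm5n : m ∈ (((w5n.copy rfl hccn1)).reverse).support := by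
      exact SimpleGraph.Walk.support_bypass_subset _ hm15
    rw [SimpleGraph.Walk.support_reverse, List.mem_reverse,
      SimpleGraph.Walk.support_copy] at hm5n
    rcases hw5n m hm5n with h | ⟨j, hj1, hj2, hj3⟩
    · exact ⟨n, by omega, le_rfl, h ▸ (hccS n).2⟩
    · exact ⟨j, by omega, by omega, hj3⟩
  -- dichotomy elimination for a pair of paths sharing the median
  have pairkill : ∀ x y : ℕ,
      ¬ TempConnected lab (cc x) (cc y) → ¬ TempConnected lab (cc x) (cc (y+1)) →
      ¬ TempConnected lab (cc (x+1)) (cc y) → ¬ TempConnected lab (cc (x+1)) (cc (y+1)) →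
      m ∈ (Q x).vertexSet → m ∈ (Q y).vertexSet → False := by
    intro x y h1 h2 h3 h4 hx hy
    have hsx : (Q x).verts 0 = cc x ∨ (Q x).verts 0 = cc (x+1) := by
      rcases hQdir x with h | h; exacts [Or.inl h.1, Or.inr h.1]
    have hex : (Q x).verts (Fin.last (Q x).len) = cc x ∨
        (Q x).verts (Fin.last (Q x).len) = cc (x+1) := by
      rcases hQdir x with h | h; exacts [Or.inr h.2, Or.inl h.2]
    have hsy : (Q y).verts 0 = cc y ∨ (Q y).verts 0 = cc (y+1) := by
      rcases hQdir y with h | h; exacts [Or.inl h.1, Or.inr h.1]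
    have hey : (Q y).verts (Fin.last (Q y).len) = cc y ∨
        (Q y).verts (Fin.last (Q y).len) = cc (y+1) := by
      rcases hQdir y with h | h; exacts [Or.inr h.2, Or.inl h.2]
    rcases TPath.shared_tc (Q x) (Q y) hx hy with htc | htc
    · rcases hsx with h | h <;> rcases hey with h' | h' <;> rw [h, h'] at htc <;>
        first | exact h1 htc | exact h2 htc | exact h3 htc | exact h4 htc
    · rcases hsy with h | h <;> rcases hex with h' | h' <;> rw [h, h'] at htc <;>
        first
          | exact h1 (TPath.tc_symm htc) | exact h2 (TPath.tc_symm htc)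
          | exact h3 (TPath.tc_symm htc) | exact h4 (TPath.tc_symm htc)
  obtain ⟨a, ha12, hmA⟩ := hma
  obtain ⟨b, hb34, hmB⟩ := hmb
  obtain ⟨jc, hjc5, hjcn, hmC⟩ := hmc
  have killjn : m ∈ (Q 3).vertexSet → m ∈ (Q n).vertexSet → False := by
    intro h3 hnn
    refine pairkill 3 n ?_ ?_ ?_ ?_ h3 hnn
    · rw [hccn]; exact noTCv 3 0 (by omega) (by omega) (by omega)
    · rw [hccn1]; exact noTCv 3 1 (by omega) (by omega) (by omega)
    · rw [hccn]; exact noTCv (3+1) 0 (by omega) (by omega) (by omega)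
    · rw [hccn1]; exact noTCv (3+1) 1 (by omega) (by omega) (by omega)
  rcases ha12 with ha | ha
  · -- a = 1
    subst ha
    rcases hb34 with hb | hb
    · -- b = 3
      subst hb
      rcases (show jc = n ∨ jc = n - 1 ∨ (5 ≤ jc ∧ jc + 2 ≤ n) from by omega) with hj | hj | hj
      · subst hj
        exact killjn hmB hmC
      · subst hj
        rcases (show n = 6 ∨ 7 ≤ n from by omega) with hn6 | hn7
        · -- triple (1,3,5)
          rw [show n - 1 = 5 by omega] at hmC
            -- the surviving configuration: n = 6 and the median lies on Q 1, Q 3, Q 5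
          have hcc6 : cc (5 + 1) = cc 0 := by
            rw [show (5:ℕ) + 1 = n by omega]; exact hccn
          have hne1 : m ≠ cc 1 := fun h =>
            noTCv 1 3 (by omega) (by omega) (by omega) (h ▸ TPath.tc_of_mem hmB ((hccS 3).1))
          have hne2 : m ≠ cc 2 := fun h =>
            noTCv 2 (3+1) (by omega) (by omega) (by omega) (h ▸ TPath.tc_of_mem hmB ((hccS 3).2))
          have hne3 : m ≠ cc 3 := fun h =>
            noTCv 3 5 (by omega) (by omega) (by omega) (h ▸ TPath.tc_of_mem hmC ((hccS 5).1))
          have hne4 : m ≠ cc (3+1) := fun h => by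
            have t := h ▸ TPath.tc_of_mem hmC ((hccS 5).2)
            rw [hcc6] at t
            exact noTCv (3+1) 0 (by omega) (by omega) (by omega) t
          have hne5 : m ≠ cc 5 := fun h =>
            noTCv 5 1 (by omega) (by omega) (by omega) (h ▸ TPath.tc_of_mem hmA ((hccS 1).1))
          have hne6 : m ≠ cc (5+1) := fun h => by
            have t := h ▸ TPath.tc_of_mem hmA ((hccS 1).2)
            rw [hcc6] at t
            exact noTCv 0 (1+1) (by omega) (by omega) (by omega) t
          rcases hQdir 1 with d1 | d1 <;> rcases hQdir 3 with d3 | d3 <;>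
            rcases hQdir 5 with d5 | d5
          · -- all forward: chain
            exact TPath.chain3 (Q 1) (Q 3) (Q 5) hmA hmB hmC
              (by rw [d1.1]; exact hne1) (by rw [d1.2]; exact hne2)
              (by rw [d3.1]; exact hne3) (by rw [d3.2]; exact hne4)
              (by rw [d5.1]; exact hne5) (by rw [d5.2]; exact hne6)
              (by rw [d1.1, d3.2]; exact noTCv 1 (3+1) (by omega) (by omega) (by omega))
              (by rw [d3.1, d5.2, hcc6]; exact noTCv 3 0 (by omega) (by omega) (by omega))
              (by rw [d5.1, d1.2]; exact noTCv 5 (1+1) (by omega) (by omega) (by omega))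
          · -- mixed at (3,5)
            rcases TPath.shared_tc (Q 3) (Q 5) hmB hmC with htc | htc
            · rw [d3.1, d5.2] at htc
              try rw [hcc6] at htc
              exact noTCv _ _ (by omega) (by omega) (by omega) htc
            · rw [d5.1, d3.2] at htc
              try rw [hcc6] at htc
              exact noTCv _ _ (by omega) (by omega) (by omega) htc
          · -- mixed at (1,3)
            rcases TPath.shared_tc (Q 1) (Q 3) hmA hmB with htc | htc
            · rw [d1.1, d3.2] at htc
              exact noTCv _ _ (by omega) (by omega) (by omega) htc
            · rw [d3.1, d1.2] at htc
              exact noTCv _ _ (by omega) (by omega) (by omega) htc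
          · -- mixed at (1,3)
            rcases TPath.shared_tc (Q 1) (Q 3) hmA hmB with htc | htc
            · rw [d1.1, d3.2] at htc
              exact noTCv _ _ (by omega) (by omega) (by omega) htc
            · rw [d3.1, d1.2] at htc
              exact noTCv _ _ (by omega) (by omega) (by omega) htc
          · -- mixed at (1,3)
            rcases TPath.shared_tc (Q 1) (Q 3) hmA hmB with htc | htc
            · rw [d1.1, d3.2] at htc
              exact noTCv _ _ (by omega) (by omega) (by omega) htc
            · rw [d3.1, d1.2] at htc
              exact noTCv _ _ (by omega) (by omega) (by omega) htc
          · -- mixed at (1,3)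
            rcases TPath.shared_tc (Q 1) (Q 3) hmA hmB with htc | htc
            · rw [d1.1, d3.2] at htc
              exact noTCv _ _ (by omega) (by omega) (by omega) htc
            · rw [d3.1, d1.2] at htc
              exact noTCv _ _ (by omega) (by omega) (by omega) htc
          · -- mixed at (3,5)
            rcases TPath.shared_tc (Q 3) (Q 5) hmB hmC with htc | htc
            · rw [d3.1, d5.2] at htc
              try rw [hcc6] at htc
              exact noTCv _ _ (by omega) (by omega) (by omega) htc
            · rw [d5.1, d3.2] at htc
              try rw [hcc6] at htc
              exact noTCv _ _ (by omega) (by omega) (by omega) htc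
          · -- all backward: reversed chain
            exact TPath.chain3 (Q 5) (Q 3) (Q 1) hmC hmB hmA
              (by rw [d5.1]; exact hne6) (by rw [d5.2]; exact hne5)
              (by rw [d3.1]; exact hne4) (by rw [d3.2]; exact hne3)
              (by rw [d1.1]; exact hne2) (by rw [d1.2]; exact hne1)
              (by rw [d5.1, d3.2, hcc6]; exact noTCv 0 3 (by omega) (by omega) (by omega))
              (by rw [d3.1, d1.2]; exact noTCv (3+1) 1 (by omega) (by omega) (by omega))
              (by rw [d1.1, d5.2]; exact noTCv (1+1) 5 (by omega) (by omega) (by omega))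
        · have e1 : n - 1 + 1 = n := by omega
          refine pairkill 3 (n-1) ?_ ?_ ?_ ?_ hmB hmC
          · exact noTCv 3 (n-1) (by omega) (by omega) (by omega)
          · rw [e1, hccn]; exact noTCv 3 0 (by omega) (by omega) (by omega)
          · exact noTCv (3+1) (n-1) (by omega) (by omega) (by omega)
          · rw [e1, hccn]; exact noTCv (3+1) 0 (by omega) (by omega) (by omega)
      · refine pairkill 1 jc ?_ ?_ ?_ ?_ hmA hmC
        · exact noTCv 1 jc (by omega) (by omega) (by omega)
        · exact noTCv 1 (jc+1) (by omega) (by omega) (by omega)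
        · exact noTCv (1+1) jc (by omega) (by omega) (by omega)
        · exact noTCv (1+1) (jc+1) (by omega) (by omega) (by omega)
    · -- b = 4 : pair (1,4) always dies
      subst hb
      refine pairkill 1 4 ?_ ?_ ?_ ?_ hmA hmB
      · exact noTCv 1 4 (by omega) (by omega) (by omega)
      · exact noTCv 1 (4+1) (by omega) (by omega) (by omega)
      · exact noTCv (1+1) 4 (by omega) (by omega) (by omega)
      · exact noTCv (1+1) (4+1) (by omega) (by omega) (by omega)
  · -- a = 2
    subst ha
    rcases hb34 with hb | hb
    · -- b = 3
      subst hb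
      rcases (show jc = n ∨ jc = n - 1 ∨ (5 ≤ jc ∧ jc + 2 ≤ n) from by omega) with hj | hj | hj
      · subst hj
        exact killjn hmB hmC
      · subst hj
        have e1 : n - 1 + 1 = n := by omega
        refine pairkill 2 (n-1) ?_ ?_ ?_ ?_ hmA hmC
        · exact noTCv 2 (n-1) (by omega) (by omega) (by omega)
        · rw [e1, hccn]; exact noTCv 2 0 (by omega) (by omega) (by omega)
        · exact noTCv (2+1) (n-1) (by omega) (by omega) (by omega)
        · rw [e1, hccn]; exact noTCv (2+1) 0 (by omega) (by omega) (by omega)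
      · refine pairkill 2 jc ?_ ?_ ?_ ?_ hmA hmC
        · exact noTCv 2 jc (by omega) (by omega) (by omega)
        · exact noTCv 2 (jc+1) (by omega) (by omega) (by omega)
        · exact noTCv (2+1) jc (by omega) (by omega) (by omega)
        · exact noTCv (2+1) (jc+1) (by omega) (by omega) (by omega)
    · -- b = 4
      subst hb
      rcases (show jc = n ∨ jc = n - 1 ∨ (5 ≤ jc ∧ jc + 2 ≤ n) from by omega) with hj | hj | hj
      · rw [hj] at hmC
        rcases (show n = 6 ∨ 7 ≤ n from by omega) with hn6 | hn7
        · -- triple (2,4,n)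
            -- the surviving configuration: n = 6 and the median lies on Q 2, Q 4, Q n
          have hne2 : m ≠ cc 2 := fun h =>
            noTCv 2 (3+1) (by omega) (by omega) (by omega) (h ▸ TPath.tc_of_mem hmB ((hccS 4).1))
          have hne3 : m ≠ cc (2+1) := fun h =>
            noTCv (2+1) (4+1) (by omega) (by omega) (by omega) (h ▸ TPath.tc_of_mem hmB ((hccS 4).2))
          have hne4 : m ≠ cc 4 := fun h => by
            have t := h ▸ TPath.tc_of_mem hmC ((hccS n).1)
            rw [hccn] at t
            exact noTCv 4 0 (by omega) (by omega) (by omega) t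
          have hne5 : m ≠ cc (4+1) := fun h => by
            have t := h ▸ TPath.tc_of_mem hmC ((hccS n).2)
            rw [hccn1] at t
            exact noTCv (4+1) 1 (by omega) (by omega) (by omega) t
          have hne6 : m ≠ cc n := fun h => by
            have t := h ▸ TPath.tc_of_mem hmA ((hccS 2).1)
            rw [hccn] at t
            exact noTCv 0 2 (by omega) (by omega) (by omega) t
          have hne7 : m ≠ cc (n+1) := fun h => by
            have t := h ▸ TPath.tc_of_mem hmA ((hccS 2).2)
            rw [hccn1] at t
            exact noTCv 1 (2+1) (by omega) (by omega) (by omega) t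
          rcases hQdir 2 with d2 | d2 <;> rcases hQdir 4 with d4 | d4 <;>
            rcases hQdir n with d6 | d6
          · -- all forward: chain
            exact TPath.chain3 (Q 2) (Q 4) (Q n) hmA hmB hmC
              (by rw [d2.1]; exact hne2) (by rw [d2.2]; exact hne3)
              (by rw [d4.1]; exact hne4) (by rw [d4.2]; exact hne5)
              (by rw [d6.1]; exact hne6) (by rw [d6.2]; exact hne7)
              (by rw [d2.1, d4.2]; exact noTCv 2 (4+1) (by omega) (by omega) (by omega))
              (by rw [d4.1, d6.2, hccn1]; exact noTCv 4 1 (by omega) (by omega) (by omega))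
              (by rw [d6.1, d2.2, hccn]; exact noTCv 0 (2+1) (by omega) (by omega) (by omega))
          · -- mixed at (4,n)
            rcases TPath.shared_tc (Q 4) (Q n) hmB hmC with htc | htc
            · rw [d4.1, d6.2] at htc
              try rw [hccn] at htc
              try rw [hccn1] at htc
              exact noTCv _ _ (by omega) (by omega) (by omega) htc
            · rw [d6.1, d4.2] at htc
              try rw [hccn] at htc
              try rw [hccn1] at htc
              exact noTCv _ _ (by omega) (by omega) (by omega) htc
          · -- mixed at (2,4)
            rcases TPath.shared_tc (Q 2) (Q 4) hmA hmB with htc | htc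
            · rw [d2.1, d4.2] at htc
              exact noTCv _ _ (by omega) (by omega) (by omega) htc
            · rw [d4.1, d2.2] at htc
              exact noTCv _ _ (by omega) (by omega) (by omega) htc
          · -- mixed at (2,4)
            rcases TPath.shared_tc (Q 2) (Q 4) hmA hmB with htc | htc
            · rw [d2.1, d4.2] at htc
              exact noTCv _ _ (by omega) (by omega) (by omega) htc
            · rw [d4.1, d2.2] at htc
              exact noTCv _ _ (by omega) (by omega) (by omega) htc
          · -- mixed at (2,4)
            rcases TPath.shared_tc (Q 2) (Q 4) hmA hmB with htc | htc
            · rw [d2.1, d4.2] at htc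
              exact noTCv _ _ (by omega) (by omega) (by omega) htc
            · rw [d4.1, d2.2] at htc
              exact noTCv _ _ (by omega) (by omega) (by omega) htc
          · -- mixed at (2,4)
            rcases TPath.shared_tc (Q 2) (Q 4) hmA hmB with htc | htc
            · rw [d2.1, d4.2] at htc
              exact noTCv _ _ (by omega) (by omega) (by omega) htc
            · rw [d4.1, d2.2] at htc
              exact noTCv _ _ (by omega) (by omega) (by omega) htc
          · -- mixed at (4,n)
            rcases TPath.shared_tc (Q 4) (Q n) hmB hmC with htc | htc
            · rw [d4.1, d6.2] at htc
              try rw [hccn] at htc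
              try rw [hccn1] at htc
              exact noTCv _ _ (by omega) (by omega) (by omega) htc
            · rw [d6.1, d4.2] at htc
              try rw [hccn] at htc
              try rw [hccn1] at htc
              exact noTCv _ _ (by omega) (by omega) (by omega) htc
          · -- all backward: reversed chain
            exact TPath.chain3 (Q n) (Q 4) (Q 2) hmC hmB hmA
              (by rw [d6.1]; exact hne7) (by rw [d6.2]; exact hne6)
              (by rw [d4.1]; exact hne5) (by rw [d4.2]; exact hne4)
              (by rw [d2.1]; exact hne3) (by rw [d2.2]; exact hne2)
              (by rw [d6.1, d4.2, hccn1]; exact noTCv 1 4 (by omega) (by omega) (by omega))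
              (by rw [d4.1, d2.2]; exact noTCv (4+1) 2 (by omega) (by omega) (by omega))
              (by rw [d2.1, d6.2, hccn]; exact noTCv (2+1) 0 (by omega) (by omega) (by omega))
        · refine pairkill 4 n ?_ ?_ ?_ ?_ hmB hmC
          · rw [hccn]; exact noTCv 4 0 (by omega) (by omega) (by omega)
          · rw [hccn1]; exact noTCv 4 1 (by omega) (by omega) (by omega)
          · rw [hccn]; exact noTCv (4+1) 0 (by omega) (by omega) (by omega)
          · rw [hccn1]; exact noTCv (4+1) 1 (by omega) (by omega) (by omega)
      · subst hj
        have e1 : n - 1 + 1 = n := by omega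
        refine pairkill 2 (n-1) ?_ ?_ ?_ ?_ hmA hmC
        · exact noTCv 2 (n-1) (by omega) (by omega) (by omega)
        · rw [e1, hccn]; exact noTCv 2 0 (by omega) (by omega) (by omega)
        · exact noTCv (2+1) (n-1) (by omega) (by omega) (by omega)
        · rw [e1, hccn]; exact noTCv (2+1) 0 (by omega) (by omega) (by omega)
      · refine pairkill 2 jc ?_ ?_ ?_ ?_ hmA hmC
        · exact noTCv 2 jc (by omega) (by omega) (by omega)
        · exact noTCv 2 (jc+1) (by omega) (by omega) (by omega)
        · exact noTCv (2+1) jc (by omega) (by omega) (by omega)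
        · exact noTCv (2+1) (jc+1) (by omega) (by omega) (by omega)
end

section
/- For every integer k ≥ 1, let 𝒮_k = (S_k, λ) be the temporal digraph with vertex set {s_1,…,s_k} ∪ {c} ∪ {t_1,…,t_k}, arcs s_i→c with λ(s_i→c) = {1} and arcs c→t_i with λ(c→t_i) = {2} for all i ∈ {1,…,k}. Then 𝒮_k is a temporal oriented tree, the maximum size of a temporal antichain of 𝒮_k is k, and the minimum cardinality of a temporally disjoint path cover of 𝒮_k is 2k − 1. In particular, temporal oriented trees (even with a star as underlying graph) do not satisfy the TD-Dilworth property. -/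
/-! ### Auxiliary material for the star example -/

section StarAux

abbrev SVert (k : ℕ) := Fin k ⊕ (Unit ⊕ Fin k)

def sctr {k : ℕ} : SVert k := Sum.inr (Sum.inl ())

def StarLab (k : ℕ) : SVert k → SVert k → Finset ℕ := fun u v =>
  Sum.elim (fun _ => Sum.elim (fun _ => ∅) (Sum.elim (fun _ => ({1} : Finset ℕ)) (fun _ => ∅)) v)
    (Sum.elim (fun _ => Sum.elim (fun _ => ∅) (Sum.elim (fun _ => ∅) (fun _ => ({2} : Finset ℕ))) v)
      (fun _ => ∅)) u

lemma starLab_cases {k : ℕ} {u v : SVert k} {t : ℕ} (h : t ∈ StarLab k u v) :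
    ((∃ a, u = Sum.inl a) ∧ v = sctr ∧ t = 1) ∨
    (u = sctr ∧ (∃ b, v = Sum.inr (Sum.inr b)) ∧ t = 2) := by
  rcases u with a | (u | a) <;> rcases v with b | (v | b) <;>
    simp_all [StarLab, sctr]

lemma starLab_to_source {k : ℕ} (u : SVert k) (a : Fin k) :
    StarLab k u (Sum.inl a) = ∅ := by
  rcases u with x | (x | x) <;> rfl

/-- single-vertex temporal path -/
def trivP {V : Type*} (lab : V → V → Finset ℕ) (v : V) : TPath lab where
  len := 0
  verts := fun _ => v
  times := fun i => i.elim0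
  inj := fun i j _ => Fin.ext (by omega)
  mono := fun i => i.elim0
  mem_lab := fun i => i.elim0

lemma trivP_mem {V : Type*} (lab : V → V → Finset ℕ) (v : V) :
    v ∈ (trivP lab v).vertexSet := ⟨0, rfl⟩

lemma tdisjoint_of_len_zero {V : Type*} {lab : V → V → Finset ℕ} {P Q : TPath lab}
    (h : P.len = 0 ∨ Q.len = 0) : TDisjoint P Q := by
  intro i j _
  rcases h with h | h
  · exact absurd i.isLt (by omega)
  · exact absurd j.isLt (by omega)

/-- the path sᵃ → c -/
def sPath1 {k : ℕ} (a : Fin k) : TPath (StarLab k) where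
  len := 1
  verts := ![Sum.inl a, sctr]
  times := ![1]
  inj := by intro i j hij; fin_cases i <;> fin_cases j <;> simp_all [sctr]
  mono := fun i j h => absurd (Subsingleton.elim i j) h.ne
  mem_lab := by intro i; fin_cases i; simp [StarLab, sctr]

/-- the path c → tᵇ -/
def sPath2 {k : ℕ} (b : Fin k) : TPath (StarLab k) where
  len := 1
  verts := ![sctr, Sum.inr (Sum.inr b)]
  times := ![2]
  inj := by intro i j hij; fin_cases i <;> fin_cases j <;> simp_all [sctr]
  mono := fun i j h => absurd (Subsingleton.elim i j) h.ne
  mem_lab := by intro i; fin_cases i; simp [StarLab, sctr]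

/-- the path sᵃ → c → tᵇ -/
def sPath3 {k : ℕ} (a b : Fin k) : TPath (StarLab k) where
  len := 2
  verts := ![Sum.inl a, sctr, Sum.inr (Sum.inr b)]
  times := ![1, 2]
  inj := by intro i j hij; fin_cases i <;> fin_cases j <;> simp_all [sctr]
  mono := by intro i j h; fin_cases i <;> fin_cases j <;> simp_all <;> omega
  mem_lab := by intro i; fin_cases i <;> simp [StarLab, sctr]

lemma tc_source_ctr {k : ℕ} (a : Fin k) : TempConnected (StarLab k) (Sum.inl a) sctr :=
  ⟨sPath1 a, ⟨0, rfl⟩, ⟨1, rfl⟩⟩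

lemma tc_ctr_sink {k : ℕ} (b : Fin k) : TempConnected (StarLab k) sctr (Sum.inr (Sum.inr b)) :=
  ⟨sPath2 b, ⟨0, rfl⟩, ⟨1, rfl⟩⟩

lemma tc_source_sink {k : ℕ} (a b : Fin k) :
    TempConnected (StarLab k) (Sum.inl a) (Sum.inr (Sum.inr b)) :=
  ⟨sPath3 a b, ⟨0, rfl⟩, ⟨2, rfl⟩⟩

/-- a source can only appear at position 0 of a temporal path -/
lemma source_pos {k : ℕ} (P : TPath (StarLab k)) (p : Fin (P.len + 1)) (a : Fin k)
    (h : P.verts p = Sum.inl a) : p = 0 := by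
  rcases Fin.eq_zero_or_eq_succ p with rfl | ⟨j, rfl⟩
  · rfl
  · exfalso
    have hm := P.mem_lab j
    rw [h, starLab_to_source] at hm
    exact absurd hm (Finset.notMem_empty _)

lemma not_tc_sources {k : ℕ} {a b : Fin k} (hab : a ≠ b) :
    ¬ TempConnected (StarLab k) (Sum.inl a) (Sum.inl b) := by
  rintro ⟨P, ⟨p, hp⟩, ⟨q, hq⟩⟩
  have hp0 := source_pos P p a hp
  have hq0 := source_pos P q b hq
  subst hp0; subst hq0
  rw [hp] at hq
  exact hab (Sum.inl.injEq .. ▸ hq)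

/-- every arc of the star touches the center, and times are 1 or 2 -/
lemma arc_touches_ctr {k : ℕ} (P : TPath (StarLab k)) (i : Fin P.len) :
    P.verts i.castSucc = sctr ∨ P.verts i.succ = sctr := by
  rcases starLab_cases (P.mem_lab i) with ⟨_, hv, _⟩ | ⟨hu, _, _⟩
  · exact Or.inr hv
  · exact Or.inl hu

lemma time_mem {k : ℕ} (P : TPath (StarLab k)) (i : Fin P.len) :
    P.times i ∈ ({1, 2} : Finset ℕ) := by
  rcases starLab_cases (P.mem_lab i) with ⟨_, _, ht⟩ | ⟨_, _, ht⟩ <;> simp [ht]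

/-- A star graph (every edge touches `c`) is acyclic. -/
lemma star_acyclic {V : Type*} (G : SimpleGraph V) (c : V)
    (h : ∀ u v : V, G.Adj u v → u = c ∨ v = c) : G.IsAcyclic := by
  intro v p hp
  cases p with
  | nil => exact hp.ne_nil rfl
  | @cons _ a _ h1 q =>
    cases q with
    | nil => exact G.loopless.irrefl v h1
    | @cons _ b _ h2 r =>
      have hnodup : (a :: r.support).Nodup := by
        simpa [SimpleGraph.Walk.support_cons] using hp.support_nodup
      have hlen := hp.three_le_length
      rcases h _ _ h1 with hv | ha
      · -- v = c
        have h1' : G.Adj c a := hv ▸ h1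
        have hb : b = c := (h _ _ h2).resolve_left h1'.ne'
        cases r with
        | nil => simp [SimpleGraph.Walk.length_cons] at hlen
        | @cons _ e _ h4 s =>
          rw [SimpleGraph.Walk.support_cons, List.nodup_cons, List.nodup_cons] at hnodup
          exact hnodup.2.1 (by rw [hb, ← hv]; exact s.end_mem_support)
      · -- a = c
        have h2' : G.Adj c b := ha ▸ h2
        cases r with
        | nil => simp [SimpleGraph.Walk.length_cons] at hlen
        | @cons _ d _ h4 s =>
          have hd : d = c := (h _ _ h4).resolve_left h2'.ne'
          rw [SimpleGraph.Walk.support_cons, List.nodup_cons] at hnodup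
          exact hnodup.1
            (List.mem_cons_of_mem _ (by rw [ha, ← hd]; exact s.start_mem_support))

@[simp] lemma trivP_verts {V : Type*} (lab : V → V → Finset ℕ) (v : V) (i : Fin 1) :
    (trivP lab v).verts i = v := rfl

@[simp] lemma trivP_len {V : Type*} (lab : V → V → Finset ℕ) (v : V) :
    (trivP lab v).len = 0 := rfl

/-- The temporally disjoint path cover of size `2k-1`. -/
def starCover (k : ℕ) (hk : 1 ≤ k) : Fin (2 * k - 1) → TPath (StarLab k) := fun i =>
  if _ : i.val = 0 then sPath3 ⟨0, hk⟩ ⟨0, hk⟩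
  else if h1 : i.val < k then trivP _ (Sum.inl ⟨i.val, h1⟩)
  else trivP _ (Sum.inr (Sum.inr ⟨i.val - (k - 1), by have := i.isLt; omega⟩))

lemma starCover_len {k : ℕ} {hk : 1 ≤ k} (i : Fin (2 * k - 1)) (h : i.val ≠ 0) :
    (starCover k hk i).len = 0 := by
  rw [starCover, dif_neg h]
  split_ifs <;> rfl

end StarAux

/-- The temporal star 𝒮ₖ (arcs sᵢ → c at time 1 and c → tᵢ at time 2) is a temporal
oriented tree whose maximum temporal antichain has size k but whose minimum temporally
disjoint path cover has size 2k - 1; hence temporal oriented trees do not satisfy the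
TD-Dilworth property. -/
theorem star_example (k : ℕ) (hk : 1 ≤ k)
    (lab : (Fin k ⊕ (Unit ⊕ Fin k)) → (Fin k ⊕ (Unit ⊕ Fin k)) → Finset ℕ)
    (hlab : ∀ u v, lab u v =
      match u, v with
      | Sum.inl _, Sum.inr (Sum.inl _) => ({1} : Finset ℕ)
      | Sum.inr (Sum.inl _), Sum.inr (Sum.inr _) => ({2} : Finset ℕ)
      | _, _ => (∅ : Finset ℕ)) :
    IsTemporalOrientedTree lab ∧
    IsGreatest (antichainSizes lab) k ∧
    IsLeast (tdpcSizes lab) (2 * k - 1) := by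
  have hl : lab = StarLab k := by
    funext u v
    rw [hlab]
    rcases u with a | (u | a) <;> rcases v with b | (v | b) <;> rfl
  subst hl
  have hadj : ∀ u v : SVert k,
      (underlyingGraph (StarLab k)).Adj u v ↔ (u ≠ v ∧ (u = sctr ∨ v = sctr)) := by
    intro u v
    constructor
    · rintro ⟨hne, hne2 | hne2⟩
      · obtain ⟨t, ht⟩ := hne2
        rcases starLab_cases ht with ⟨_, hv, _⟩ | ⟨hu, _, _⟩
        · exact ⟨hne, Or.inr hv⟩
        · exact ⟨hne, Or.inl hu⟩
      · obtain ⟨t, ht⟩ := hne2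
        rcases starLab_cases ht with ⟨_, hv, _⟩ | ⟨hu, _, _⟩
        · exact ⟨hne, Or.inl hv⟩
        · exact ⟨hne, Or.inr hu⟩
    · rintro ⟨hne, rfl | rfl⟩
      · refine ⟨hne, ?_⟩
        rcases v with b | (x | b)
        · exact Or.inr ⟨1, by simp [StarLab, sctr]⟩
        · cases x; exact absurd rfl hne
        · exact Or.inl ⟨2, by simp [StarLab, sctr]⟩
      · refine ⟨hne, ?_⟩
        rcases u with a | (x | a)
        · exact Or.inl ⟨1, by simp [StarLab, sctr]⟩
        · cases x; exact absurd rfl hne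
        · exact Or.inr ⟨2, by simp [StarLab, sctr]⟩
  refine ⟨⟨⟨?_, ?_⟩, ?_⟩, ⟨?_, ?_⟩, ?_, ?_⟩
  · -- connected
    rw [SimpleGraph.connected_iff_exists_forall_reachable]
    refine ⟨sctr, fun w => ?_⟩
    by_cases hw : w = sctr
    · subst hw; exact SimpleGraph.Reachable.refl _
    · exact (((hadj sctr w).mpr ⟨Ne.symm hw, Or.inl rfl⟩)).reachable
  · -- acyclic
    exact star_acyclic _ sctr (fun u v huv => ((hadj u v).mp huv).2)
  · -- orientation
    intro u v h
    rcases u with a | (x | a) <;> rcases v with b | (y | b) <;>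
      first
        | rfl
        | (exfalso; simpa [StarLab] using h)
  · -- antichain of size k
    refine ⟨Finset.univ.image Sum.inl, ?_, ?_⟩
    · rw [Finset.card_image_of_injective _ Sum.inl_injective, Finset.card_univ,
        Fintype.card_fin]
    · intro u hu v hv hne
      simp only [Finset.coe_image, Finset.coe_univ, Set.image_univ, Set.mem_range] at hu hv
      obtain ⟨a, rfl⟩ := hu
      obtain ⟨b, rfl⟩ := hv
      exact not_tc_sources (fun h => hne (congrArg _ h))
  · -- every antichain has size ≤ k
    rintro m ⟨S, rfl, hS⟩
    by_cases hA : ∀ x ∈ S, ∃ a, x = Sum.inl a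
    · calc S.card ≤ (Finset.univ.image (Sum.inl : Fin k → SVert k)).card :=
            Finset.card_le_card (fun x hx => by obtain ⟨a, rfl⟩ := hA x hx; simp)
        _ = k := by
            rw [Finset.card_image_of_injective _ Sum.inl_injective, Finset.card_univ,
              Fintype.card_fin]
    · push_neg at hA
      obtain ⟨x, hx, hxn⟩ := hA
      rcases x with a | (u | b)
      · exact absurd rfl (hxn a)
      · cases u
        have hsub : S ⊆ {sctr} := by
          intro y hy
          rcases y with a | (u | b)
          · exact absurd (tc_source_ctr a) (hS hy hx (by simp [sctr]))
          · cases u; simp [sctr]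
          · exact absurd (tc_ctr_sink b) (hS hx hy (by simp [sctr]))
        calc S.card ≤ 1 := by simpa using Finset.card_le_card hsub
          _ ≤ k := hk
      · have hsub : S ⊆ Finset.univ.image (fun b : Fin k => (Sum.inr (Sum.inr b) : SVert k)) := by
          intro y hy
          rcases y with a | (u | b')
          · exact absurd (tc_source_sink a b) (hS hy hx (by simp))
          · cases u; exact absurd (tc_ctr_sink b) (hS hy hx (by simp [sctr]))
          · simp
        calc S.card ≤ _ := Finset.card_le_card hsub
          _ ≤ k := by
            rw [Finset.card_image_of_injective _
              (fun a b h => by simpa using h : Function.Injective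
                (fun b : Fin k => (Sum.inr (Sum.inr b) : SVert k)))]
            simp
  · -- a TDPC of size 2k-1 exists
    refine ⟨starCover k hk, ?_, ?_⟩
    · intro v
      rcases v with a | (u | b)
      · refine ⟨⟨a.val, by have := a.isLt; omega⟩, ?_⟩
        by_cases h0 : a.val = 0
        · have ha : a = ⟨0, hk⟩ := Fin.ext h0
          rw [starCover, dif_pos h0]
          exact ⟨0, by simp [sPath3, ha]⟩
        · rw [starCover, dif_neg h0, dif_pos a.isLt]
          exact ⟨0, rfl⟩
      · cases u
        refine ⟨⟨0, by omega⟩, ?_⟩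
        rw [starCover, dif_pos rfl]
        exact ⟨1, by simp [sPath3, sctr]⟩
      · by_cases h0 : b.val = 0
        · refine ⟨⟨0, by omega⟩, ?_⟩
          have hb : b = ⟨0, hk⟩ := Fin.ext h0
          rw [starCover, dif_pos rfl]
          exact ⟨2, by simp [sPath3, hb]⟩
        · refine ⟨⟨b.val + k - 1, by have := b.isLt; omega⟩, ?_⟩
          rw [starCover, dif_neg (by simp; omega), dif_neg (by simp; omega)]
          refine ⟨0, ?_⟩
          change (Sum.inr (Sum.inr _) : SVert k) = _
          exact congrArg _ (congrArg _ (Fin.ext (by simp; omega)))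
    · intro i j hij
      have : i.val ≠ 0 ∨ j.val ≠ 0 := by
        by_contra hcon
        push_neg at hcon
        exact hij (Fin.ext (hcon.1.trans hcon.2.symm))
      rcases this with h | h
      · exact tdisjoint_of_len_zero (Or.inl (starCover_len i h))
      · exact tdisjoint_of_len_zero (Or.inr (starCover_len j h))
  · -- every TDPC has size ≥ 2k-1
    rintro m ⟨C, hC, hD⟩
    have hV : Fintype.card (SVert k) = 2 * k + 1 := by
      simp [SVert]; omega
    set T : Fin m → Finset ℕ := fun i => Finset.univ.image (C i).times with hT
    have hTdisj : ∀ i ∈ (Finset.univ : Finset (Fin m)), ∀ j ∈ Finset.univ, i ≠ j →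
        Disjoint (T i) (T j) := by
      intro i _ j _ hij
      rw [Finset.disjoint_left]
      intro t hti htj
      simp only [hT, Finset.mem_image, Finset.mem_univ, true_and] at hti htj
      obtain ⟨a, ha⟩ := hti
      obtain ⟨b, hb⟩ := htj
      have hca := arc_touches_ctr (C i) a
      have hcb := arc_touches_ctr (C j) b
      refine hD i j hij a b ?_ (ha.trans hb.symm)
      rcases hca with h1 | h1 <;> rcases hcb with h2 | h2
      · exact Or.inl (h1.trans h2.symm)
      · exact Or.inr (Or.inl (h1.trans h2.symm))
      · exact Or.inr (Or.inr (Or.inl (h1.trans h2.symm)))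
      · exact Or.inr (Or.inr (Or.inr (h1.trans h2.symm)))
    have hsum2 : ∑ i, (C i).len ≤ 2 := by
      have h1 : ∑ i, (T i).card = (Finset.univ.biUnion T).card :=
        (Finset.card_biUnion hTdisj).symm
      have h2 : Finset.univ.biUnion T ⊆ ({1, 2} : Finset ℕ) := by
        intro t ht
        simp only [hT, Finset.mem_biUnion, Finset.mem_image, Finset.mem_univ, true_and] at ht
        obtain ⟨i, a, ha⟩ := ht
        exact ha ▸ time_mem (C i) a
      have h3 : ∀ i : Fin m, (T i).card = (C i).len := by
        intro i
        rw [hT]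
        rw [Finset.card_image_of_injective _ (C i).mono.injective, Finset.card_univ,
          Fintype.card_fin]
      calc ∑ i, (C i).len = ∑ i, (T i).card := by simp [h3]
        _ = (Finset.univ.biUnion T).card := h1
        _ ≤ ({1, 2} : Finset ℕ).card := Finset.card_le_card h2
        _ ≤ 2 := by simp
    have hcover : 2 * k + 1 ≤ ∑ i, ((C i).len + 1) := by
      have hsub : (Finset.univ : Finset (SVert k)) ⊆
          Finset.univ.biUnion (fun i => Finset.univ.image (C i).verts) := by
        intro v _
        obtain ⟨i, p, hp⟩ := hC v
        simp only [Finset.mem_biUnion, Finset.mem_image, Finset.mem_univ, true_and]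
        exact ⟨i, p, hp⟩
      calc 2 * k + 1 = (Finset.univ : Finset (SVert k)).card := by
            rw [Finset.card_univ, hV]
        _ ≤ (Finset.univ.biUnion (fun i => Finset.univ.image (C i).verts)).card :=
            Finset.card_le_card hsub
        _ ≤ ∑ i, (Finset.univ.image (C i).verts).card := Finset.card_biUnion_le
        _ ≤ ∑ i, ((C i).len + 1) := Finset.sum_le_sum (fun i _ =>
            le_trans Finset.card_image_le (by simp))
    have hsplit : ∑ i, ((C i).len + 1) = (∑ i, (C i).len) + m := by
      rw [Finset.sum_add_distrib, Finset.sum_const, Finset.card_univ, Fintype.card_fin,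
        smul_eq_mul, mul_one]
    omega
end
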